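/- arXiv:1005.4492 — 2 statements merged into one kernel-verified Lean document; each statement's English description precedes it below -/
import Mathlib

section
/- Suppose there exist a resolvable 2-(v,k,1) design D and an affine plane of order k. Then there exists a resolvable 2-(kv,k,1) design D* whose 1-block intersection graph is silver; moreover D* contains a parallel class P = {{1,...,k} × {x} : x a point of D} which is a maximum independent set of the 1-block intersection graph with respect to which a silver coloring exists. -/
open Finset

variable {α : Type*}

/-- A Steiner 2-design `S(2,k,v)`: the point set has `v` points, every block has
`k` points, and every pair of distinct points lies in exactly one block. -/
def IsSteiner [Fintype α] [DecidableEq α] (v k : ℕ) (B : Finset (Finset α)) : Prop :=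
  Fintype.card α = v ∧ (∀ b ∈ B, b.card = k) ∧
    ∀ x y : α, x ≠ y → (B.filter fun b => x ∈ b ∧ y ∈ b).card = 1

/-- The `i`-block intersection graph: vertices are the blocks of `B`, two blocks
adjacent iff they intersect in exactly `i` points. -/
def BIG [DecidableEq α] (i : ℕ) (B : Finset (Finset α)) :
    SimpleGraph {b : Finset α // b ∈ B} where
  Adj b₁ b₂ := b₁ ≠ b₂ ∧ ((b₁ : Finset α) ∩ (b₂ : Finset α)).card = i
  symm := ⟨fun a b ⟨h1, h2⟩ => ⟨h1.symm, by rwa [Finset.inter_comm]⟩⟩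
  loopless := ⟨fun a ⟨h, _⟩ => h rfl⟩

instance [DecidableEq α] (i : ℕ) (B : Finset (Finset α)) :
    DecidableRel (BIG (α := α) i B).Adj := fun _ _ => by unfold BIG; exact instDecidableAnd

/-- `I` is a maximum independent set of `G`. -/
def IsMaxIndep {V : Type*} (G : SimpleGraph V) (I : Finset V) : Prop :=
  (∀ a ∈ I, ∀ b ∈ I, ¬ G.Adj a b) ∧
    ∀ J : Finset V, (∀ a ∈ J, ∀ b ∈ J, ¬ G.Adj a b) → J.card ≤ I.card

/-- A silver coloring of the `r`-regular graph `G` with respect to `I`: a proper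
`(r+1)`-coloring under which every vertex of `I` is rainbow (all `r+1` colors
appear on its closed neighborhood). -/
def SilverWith {V : Type*} (G : SimpleGraph V) (r : ℕ) (I : Finset V) : Prop :=
  ∃ c : V → Fin (r + 1), (∀ a b, G.Adj a b → c a ≠ c b) ∧
    ∀ x ∈ I, ∀ col : Fin (r + 1), ∃ y, (y = x ∨ G.Adj x y) ∧ c y = col

/-- `G` is silver: some silver coloring exists with respect to some maximum
independent set. -/
def IsSilver {V : Type*} (G : SimpleGraph V) (r : ℕ) : Prop :=
  ∃ I : Finset V, IsMaxIndep G I ∧ SilverWith G r I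

/-- A parallel class: pairwise disjoint blocks of `B` covering every point. -/
def IsParallelClass [DecidableEq α] (B P : Finset (Finset α)) : Prop :=
  P ⊆ B ∧ (∀ b₁ ∈ P, ∀ b₂ ∈ P, b₁ ≠ b₂ → b₁ ∩ b₂ = ∅) ∧ ∀ x : α, ∃ b ∈ P, x ∈ b

/-- A resolvable design: the blocks partition into parallel classes. -/
def IsResolvable [DecidableEq α] (B : Finset (Finset α)) : Prop :=
  ∃ cs : Finset (Finset (Finset α)),
    (∀ P ∈ cs, IsParallelClass B P) ∧ ∀ b ∈ B, ∃! P, P ∈ cs ∧ b ∈ P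

section Counting
variable {γ : Type*} [Fintype γ] [DecidableEq γ] {v k : ℕ} {B : Finset (Finset γ)}

lemma steiner_pair_unique (h : IsSteiner v k B) {x y : γ} (hxy : x ≠ y)
    {b₁ b₂ : Finset γ} (h₁ : b₁ ∈ B) (h₂ : b₂ ∈ B)
    (hx₁ : x ∈ b₁) (hy₁ : y ∈ b₁) (hx₂ : x ∈ b₂) (hy₂ : y ∈ b₂) : b₁ = b₂ := by
  have hc := h.2.2 x y hxy
  by_contra hne
  have : 2 ≤ (B.filter fun b => x ∈ b ∧ y ∈ b).card := by
    apply Finset.one_lt_card.mpr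
    exact ⟨b₁, by simp [h₁, hx₁, hy₁], b₂, by simp [h₂, hx₂, hy₂], hne⟩
  omega

lemma steiner_pair_exists (h : IsSteiner v k B) {x y : γ} (hxy : x ≠ y) :
    ∃ b ∈ B, x ∈ b ∧ y ∈ b := by
  have hc := h.2.2 x y hxy
  have : (B.filter fun b => x ∈ b ∧ y ∈ b).Nonempty := Finset.card_pos.mp (by omega)
  obtain ⟨b, hb⟩ := this
  rw [Finset.mem_filter] at hb
  exact ⟨b, hb.1, hb.2⟩

lemma steiner_inter_le_one (h : IsSteiner v k B) {b₁ b₂ : Finset γ}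
    (h₁ : b₁ ∈ B) (h₂ : b₂ ∈ B) (hne : b₁ ≠ b₂) : (b₁ ∩ b₂).card ≤ 1 := by
  by_contra hgt
  obtain ⟨x, hx, y, hy, hxy⟩ := Finset.one_lt_card.mp (show 1 < (b₁ ∩ b₂).card by omega)
  rw [Finset.mem_inter] at hx hy
  exact hne (steiner_pair_unique h hxy h₁ h₂ hx.1 hy.1 hx.2 hy.2)

lemma steiner_count (h : IsSteiner v k B) : B.card * (k * (k-1)) = v * (v-1) := by
  have key : ∀ p : γ × γ, p ∈ (univ : Finset γ).offDiag →
      (B.filter fun b => p.1 ∈ b ∧ p.2 ∈ b).card = 1 := by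
    intro p hp
    rw [Finset.mem_offDiag] at hp
    exact h.2.2 p.1 p.2 hp.2.2
  have e1 : ∑ p ∈ (univ : Finset γ).offDiag, (B.filter fun b => p.1 ∈ b ∧ p.2 ∈ b).card
      = v * (v-1) := by
    rw [Finset.sum_congr rfl key, Finset.sum_const, smul_eq_mul, mul_one, Finset.offDiag_card]
    rw [Finset.card_univ, h.1, Nat.mul_sub_one]
  have e2 : ∑ p ∈ (univ : Finset γ).offDiag, (B.filter fun b => p.1 ∈ b ∧ p.2 ∈ b).card
      = ∑ b ∈ B, ((univ : Finset γ).offDiag.filter fun p => p.1 ∈ b ∧ p.2 ∈ b).card := by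
    simp only [Finset.card_filter]
    exact Finset.sum_comm
  have e3 : ∀ b ∈ B, ((univ : Finset γ).offDiag.filter fun p => p.1 ∈ b ∧ p.2 ∈ b).card
      = k * (k-1) := by
    intro b hb
    have : (univ : Finset γ).offDiag.filter (fun p => p.1 ∈ b ∧ p.2 ∈ b) = b.offDiag := by
      ext p
      simp [Finset.mem_offDiag, Finset.mem_filter]
      tauto
    rw [this, Finset.offDiag_card, h.2.1 b hb, Nat.mul_sub_one]
  calc B.card * (k * (k-1)) = ∑ _b ∈ B, k * (k-1) := by rw [Finset.sum_const, smul_eq_mul]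
    _ = ∑ b ∈ B, ((univ : Finset γ).offDiag.filter fun p => p.1 ∈ b ∧ p.2 ∈ b).card :=
        (Finset.sum_congr rfl e3).symm
    _ = v * (v-1) := by rw [← e2, e1]

lemma steiner_repl (h : IsSteiner v k B) (x : γ) :
    (B.filter fun b => x ∈ b).card * (k-1) = v - 1 := by
  have e1 : ∑ y ∈ (univ : Finset γ).erase x, (B.filter fun b => x ∈ b ∧ y ∈ b).card = v - 1 := by
    rw [Finset.sum_congr rfl (fun y hy => h.2.2 x y (Ne.symm (Finset.ne_of_mem_erase hy)))]
    rw [Finset.sum_const, smul_eq_mul, mul_one, Finset.card_erase_of_mem (Finset.mem_univ x),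
      Finset.card_univ, h.1]
  have e2 : ∑ y ∈ (univ : Finset γ).erase x, (B.filter fun b => x ∈ b ∧ y ∈ b).card
      = ∑ b ∈ B, (((univ : Finset γ).erase x).filter fun y => x ∈ b ∧ y ∈ b).card := by
    simp only [Finset.card_filter]
    exact Finset.sum_comm
  have e3 : ∀ b ∈ B, (((univ : Finset γ).erase x).filter fun y => x ∈ b ∧ y ∈ b).card
      = if x ∈ b then k - 1 else 0 := by
    intro b hb
    by_cases hx : x ∈ b
    · rw [if_pos hx]
      have : ((univ : Finset γ).erase x).filter (fun y => x ∈ b ∧ y ∈ b) = b.erase x := by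
        ext y; simp [Finset.mem_erase, hx]; try tauto
      rw [this, Finset.card_erase_of_mem hx, h.2.1 b hb]
    · rw [if_neg hx]
      simp [Finset.filter_eq_empty_iff, hx]
  rw [e2, Finset.sum_congr rfl e3, ← Finset.sum_filter, Finset.sum_const, smul_eq_mul] at e1
  exact e1

lemma parallel_card {P : Finset (Finset γ)} (hP : IsParallelClass B P)
    (hcard : ∀ b ∈ B, b.card = k) (hv : Fintype.card γ = v) : P.card * k = v := by
  have huniv : P.biUnion id = (univ : Finset γ) := by
    ext x
    simp only [Finset.mem_biUnion, Finset.mem_univ, iff_true, id]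
    exact hP.2.2 x
  have hdisj : ∀ b₁ ∈ P, ∀ b₂ ∈ P, b₁ ≠ b₂ → Disjoint (id b₁) (id b₂) := by
    intro b₁ h₁ b₂ h₂ hne
    rw [Finset.disjoint_iff_inter_eq_empty]
    exact hP.2.1 b₁ h₁ b₂ h₂ hne
  have := Finset.card_biUnion hdisj
  rw [huniv, Finset.card_univ, hv] at this
  rw [this, show (∑ u ∈ P, (id u).card) = ∑ _u ∈ P, k from
    Finset.sum_congr rfl fun b hb => by simpa using hcard b (hP.1 hb),
    Finset.sum_const, smul_eq_mul]

lemma class_count {cs : Finset (Finset (Finset γ))} (hB : IsSteiner v k B)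
    (hcs : ∀ P ∈ cs, IsParallelClass B P) (huniq : ∀ b ∈ B, ∃! P, P ∈ cs ∧ b ∈ P)
    (hv : 0 < v) : cs.card * (k - 1) = v - 1 := by
  have : Nonempty γ := by
    rw [← Fintype.card_pos_iff, hB.1]; exact hv
  obtain ⟨x₀⟩ := this
  have hex : ∀ P : Finset (Finset γ), ∃ b, P ∈ cs → (b ∈ P ∧ x₀ ∈ b) := by
    intro P
    by_cases hP : P ∈ cs
    · obtain ⟨b, hb, hxb⟩ := (hcs P hP).2.2 x₀
      exact ⟨b, fun _ => ⟨hb, hxb⟩⟩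
    · exact ⟨∅, fun h => absurd h hP⟩
  choose f hf using hex
  have hbij : cs.card = (B.filter fun b => x₀ ∈ b).card := by
    apply Finset.card_bij (fun P _ => f P)
    · intro P hP
      rw [Finset.mem_filter]
      exact ⟨(hcs P hP).1 (hf P hP).1, (hf P hP).2⟩
    · intro P₁ h₁ P₂ h₂ heq
      obtain ⟨Q, _, hQuniq⟩ := huniq (f P₁) ((hcs P₁ h₁).1 (hf P₁ h₁).1)
      have e₁ := hQuniq P₁ ⟨h₁, (hf P₁ h₁).1⟩
      have e₂ := hQuniq P₂ ⟨h₂, heq ▸ (hf P₂ h₂).1⟩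
      rw [e₁, e₂]
    · intro b hb
      rw [Finset.mem_filter] at hb
      obtain ⟨P, ⟨hP, hbP⟩, _⟩ := huniq b hb.1
      refine ⟨P, hP, ?_⟩
      by_contra hne
      have := (hcs P hP).2.1 b hbP (f P) (hf P hP).1 (fun h => hne (h ▸ rfl))
      have : x₀ ∈ b ∩ f P := Finset.mem_inter.mpr ⟨hb.2, (hf P hP).2⟩
      rw [‹b ∩ f P = ∅›] at this
      exact absurd this (Finset.notMem_empty x₀)
  rw [hbij]
  exact steiner_repl hB x₀

end Counting

section RowInd

/-- Row coordinate of a point inside a block of size `k`. -/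
noncomputable def rowOf {β : Type*} [DecidableEq β] {k : ℕ} (hk : 0 < k)
    (q : Finset β) (p : β) : Fin k :=
  if h : q.card = k ∧ p ∈ q then Finset.equivFinOfCardEq h.1 ⟨p, h.2⟩ else ⟨0, hk⟩

lemma rowOf_inj {β : Type*} [DecidableEq β] {k : ℕ} (hk : 0 < k) {q : Finset β}
    (hq : q.card = k) {p₁ p₂ : β} (h₁ : p₁ ∈ q) (h₂ : p₂ ∈ q)
    (h : rowOf hk q p₁ = rowOf hk q p₂) : p₁ = p₂ := by
  rw [rowOf, rowOf, dif_pos ⟨hq, h₁⟩, dif_pos ⟨hq, h₂⟩] at h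
  have := (Finset.equivFinOfCardEq (n := k) hq).injective h
  exact congrArg Subtype.val this

lemma rowOf_surj {β : Type*} [DecidableEq β] {k : ℕ} (hk : 0 < k) {q : Finset β}
    (hq : q.card = k) (i : Fin k) : ∃ p ∈ q, rowOf hk q p = i := by
  refine ⟨((Finset.equivFinOfCardEq hq).symm i).1, ((Finset.equivFinOfCardEq hq).symm i).2, ?_⟩
  rw [rowOf, dif_pos ⟨hq, ((Finset.equivFinOfCardEq hq).symm i).2⟩]
  simp

/-- Matching between a parallel class (blocks as indices) and a `k`-set. -/
noncomputable def indOf {β α : Type*} [DecidableEq β] [DecidableEq α] (k : ℕ) (x₀ : α)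
    (P₀ : Finset (Finset β)) (b' : Finset α) (q : Finset β) : α :=
  if h : P₀.card = k ∧ b'.card = k ∧ q ∈ P₀ then
    ((Finset.equivFinOfCardEq h.2.1).symm (Finset.equivFinOfCardEq h.1 ⟨q, h.2.2⟩)).1
  else x₀

lemma indOf_mem {β α : Type*} [DecidableEq β] [DecidableEq α] {k : ℕ} (x₀ : α)
    {P₀ : Finset (Finset β)} {b' : Finset α} (hP : P₀.card = k) (hb : b'.card = k)
    {q : Finset β} (hq : q ∈ P₀) : indOf k x₀ P₀ b' q ∈ b' := by
  rw [indOf, dif_pos ⟨hP, hb, hq⟩]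
  exact ((Finset.equivFinOfCardEq hb).symm _).2

lemma indOf_inj {β α : Type*} [DecidableEq β] [DecidableEq α] {k : ℕ} (x₀ : α)
    {P₀ : Finset (Finset β)} {b' : Finset α} (hP : P₀.card = k) (hb : b'.card = k)
    {q₁ q₂ : Finset β} (h₁ : q₁ ∈ P₀) (h₂ : q₂ ∈ P₀)
    (h : indOf k x₀ P₀ b' q₁ = indOf k x₀ P₀ b' q₂) : q₁ = q₂ := by
  rw [indOf, indOf, dif_pos ⟨hP, hb, h₁⟩, dif_pos ⟨hP, hb, h₂⟩] at h
  have := (Finset.equivFinOfCardEq hb).symm.injective (Subtype.ext h)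
  have := (Finset.equivFinOfCardEq hP).injective this
  exact congrArg Subtype.val this

lemma indOf_surj {β α : Type*} [DecidableEq β] [DecidableEq α] {k : ℕ} (x₀ : α)
    {P₀ : Finset (Finset β)} {b' : Finset α} (hP : P₀.card = k) (hb : b'.card = k)
    {x : α} (hx : x ∈ b') : ∃ q ∈ P₀, indOf k x₀ P₀ b' q = x := by
  refine ⟨((Finset.equivFinOfCardEq hP).symm ((Finset.equivFinOfCardEq hb) ⟨x, hx⟩)).1,
    ((Finset.equivFinOfCardEq hP).symm _).2, ?_⟩
  rw [indOf, dif_pos ⟨hP, hb, ((Finset.equivFinOfCardEq hP).symm _).2⟩]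
  simp

end RowInd


section Construction

set_option linter.unusedSectionVars false

variable {β : Type*} [Fintype α] [DecidableEq α] [Fintype β] [DecidableEq β]

/-- The point embedding of the `b'`-th copy of the plane. -/
noncomputable def eMap {k : ℕ} (hk0 : 0 < k) (x₀ : α) (P₀ : Finset (Finset β))
    (colf : β → Finset β) (b' : Finset α) (p : β) : Fin k × α :=
  (rowOf hk0 (colf p) p, indOf k x₀ P₀ b' (colf p))

/-- Vertical block over a point. -/
def vBlock (k : ℕ) (x : α) : Finset (Fin k × α) :=
  Finset.univ.image fun i : Fin k => (i, x)

noncomputable def mkBlock {k : ℕ} (hk0 : 0 < k) (x₀ : α) (P₀ : Finset (Finset β))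
    (colf : β → Finset β) (b' : Finset α) (ℓ : Finset β) : Finset (Fin k × α) :=
  ℓ.image (eMap hk0 x₀ P₀ colf b')

noncomputable def newDesign {k : ℕ} (hk0 : 0 < k) (x₀ : α) (P₀ : Finset (Finset β))
    (colf : β → Finset β) (D : Finset (Finset α)) (A : Finset (Finset β)) :
    Finset (Finset (Fin k × α)) :=
  (Finset.univ.image (vBlock k)) ∪ D.biUnion fun b' => (A \ P₀).image (mkBlock hk0 x₀ P₀ colf b')

variable {k v : ℕ} {P₀ : Finset (Finset β)} {colf : β → Finset β}
  {D : Finset (Finset α)} {A : Finset (Finset β)}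

lemma vBlock_mem_iff (x : α) (z : Fin k × α) : z ∈ vBlock k x ↔ z.2 = x := by
  constructor
  · rintro hz
    obtain ⟨i, -, hi⟩ := Finset.mem_image.mp hz
    rw [← hi]
  · intro h
    exact Finset.mem_image.mpr ⟨z.1, Finset.mem_univ _, by rw [← h]⟩

lemma vBlock_card (x : α) : (vBlock k x).card = k := by
  rw [vBlock, Finset.card_image_of_injective _ (fun i j h => (Prod.mk.injEq _ _ _ _).mp h |>.1),
    Finset.card_univ, Fintype.card_fin]

lemma vBlock_inj (hk0 : 0 < k) {x y : α} (h : vBlock k x = vBlock k y) : x = y := by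
  have : ((⟨0, hk0⟩ : Fin k), x) ∈ vBlock k x := (vBlock_mem_iff x _).mpr rfl
  rw [h, vBlock_mem_iff] at this
  exact this

lemma vBlock_snd_image (hk0 : 0 < k) (x : α) : (vBlock (α := α) k x).image Prod.snd = {x} := by
  apply Finset.eq_singleton_iff_unique_mem.mpr
  constructor
  · exact Finset.mem_image.mpr ⟨((⟨0, hk0⟩ : Fin k), x), (vBlock_mem_iff x _).mpr rfl, rfl⟩
  · intro y hy
    obtain ⟨z, hz, hzy⟩ := Finset.mem_image.mp hy
    rw [← hzy]; exact (vBlock_mem_iff x z).mp hz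

lemma eMap_snd_mem (hk0 : 0 < k) (x₀ : α) (hP₀k : P₀.card = k) (hcolP : ∀ p, colf p ∈ P₀)
    {b' : Finset α} (hb : b'.card = k) (p : β) :
    (eMap hk0 x₀ P₀ colf b' p).2 ∈ b' :=
  indOf_mem x₀ hP₀k hb (hcolP p)

lemma eMap_inj (hk0 : 0 < k) (x₀ : α) (hP₀k : P₀.card = k) (hqk : ∀ q ∈ P₀, q.card = k)
    (hcolP : ∀ p, colf p ∈ P₀) (hcolin : ∀ p, p ∈ colf p)
    {b' : Finset α} (hb : b'.card = k) :
    Function.Injective (eMap hk0 x₀ P₀ colf b') := by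
  intro p₁ p₂ h
  have h1 := congrArg Prod.fst h
  have h2 := congrArg Prod.snd h
  simp only [eMap] at h1 h2
  have hcq : colf p₁ = colf p₂ := indOf_inj x₀ hP₀k hb (hcolP p₁) (hcolP p₂) h2
  rw [← hcq] at h1
  exact rowOf_inj hk0 (hqk _ (hcolP p₁)) (hcolin p₁) (hcq ▸ hcolin p₂) h1

lemma eMap_exists (hk0 : 0 < k) (x₀ : α) (hP₀k : P₀.card = k) (hqk : ∀ q ∈ P₀, q.card = k)
    (hcoluniq : ∀ p q, q ∈ P₀ → p ∈ q → q = colf p)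
    {b' : Finset α} (hb : b'.card = k) {x : α} (hx : x ∈ b') (i : Fin k) :
    ∃ p, eMap hk0 x₀ P₀ colf b' p = (i, x) := by
  obtain ⟨q, hq, hqx⟩ := indOf_surj (P₀ := P₀) x₀ hP₀k hb hx
  obtain ⟨p, hpq, hpi⟩ := rowOf_surj hk0 (hqk q hq) i
  have hcol : colf p = q := (hcoluniq p q hq hpq).symm
  refine ⟨p, ?_⟩
  simp only [eMap, hcol, hpi, hqx]

lemma mkBlock_card (hk0 : 0 < k) (x₀ : α) (hP₀k : P₀.card = k) (hqk : ∀ q ∈ P₀, q.card = k)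
    (hcolP : ∀ p, colf p ∈ P₀) (hcolin : ∀ p, p ∈ colf p)
    {b' : Finset α} (hb : b'.card = k) {ℓ : Finset β} (hℓ : ℓ.card = k) :
    (mkBlock hk0 x₀ P₀ colf b' ℓ).card = k := by
  rw [mkBlock, Finset.card_image_of_injective _ (eMap_inj hk0 x₀ hP₀k hqk hcolP hcolin hb), hℓ]

lemma colf_inj_on (hA : IsSteiner (k^2) k A) (hP₀sub : P₀ ⊆ A)
    (hcolP : ∀ p, colf p ∈ P₀) (hcolin : ∀ p, p ∈ colf p)
    {ℓ : Finset β} (hℓ : ℓ ∈ A) (hℓP : ℓ ∉ P₀) {p₁ p₂ : β}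
    (h₁ : p₁ ∈ ℓ) (h₂ : p₂ ∈ ℓ) (h : colf p₁ = colf p₂) : p₁ = p₂ := by
  by_contra hne
  have hq := hcolP p₁
  have : ℓ = colf p₁ := steiner_pair_unique hA hne hℓ (hP₀sub hq) h₁ h₂
    (hcolin p₁) (h ▸ hcolin p₂)
  exact hℓP (this ▸ hq)

lemma colf_image (hA : IsSteiner (k^2) k A) (hP₀sub : P₀ ⊆ A) (hP₀k : P₀.card = k)
    (hcolP : ∀ p, colf p ∈ P₀) (hcolin : ∀ p, p ∈ colf p)
    {ℓ : Finset β} (hℓ : ℓ ∈ A) (hℓP : ℓ ∉ P₀) : ℓ.image colf = P₀ := by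
  apply Finset.eq_of_subset_of_card_le
  · intro q hq
    obtain ⟨p, -, hp⟩ := Finset.mem_image.mp hq
    exact hp ▸ hcolP p
  · rw [Finset.card_image_of_injOn
      (fun p₁ h₁ p₂ h₂ h => colf_inj_on hA hP₀sub hcolP hcolin hℓ hℓP h₁ h₂ h),
      hA.2.1 ℓ hℓ, hP₀k]

lemma mkBlock_snd_image (hk0 : 0 < k) (x₀ : α)
    (hA : IsSteiner (k^2) k A) (hP₀sub : P₀ ⊆ A) (hP₀k : P₀.card = k)
    (hcolP : ∀ p, colf p ∈ P₀) (hcolin : ∀ p, p ∈ colf p)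
    {b' : Finset α} (hb : b'.card = k) {ℓ : Finset β}
    (hℓ : ℓ ∈ A) (hℓP : ℓ ∉ P₀) :
    (mkBlock hk0 x₀ P₀ colf b' ℓ).image Prod.snd = b' := by
  have h1 : (mkBlock hk0 x₀ P₀ colf b' ℓ).image Prod.snd
      = (ℓ.image colf).image (indOf k x₀ P₀ b') := by
    rw [mkBlock, Finset.image_image, Finset.image_image]
    rfl
  rw [h1, colf_image hA hP₀sub hP₀k hcolP hcolin hℓ hℓP]
  apply Finset.eq_of_subset_of_card_le
  · intro x hx
    obtain ⟨q, hq, hqx⟩ := Finset.mem_image.mp hx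
    exact hqx ▸ indOf_mem x₀ hP₀k hb hq
  · rw [Finset.card_image_of_injOn (fun q₁ h₁ q₂ h₂ h => indOf_inj x₀ hP₀k hb h₁ h₂ h),
      hb, hP₀k]

lemma vBlock_ne_mkBlock (hk0 : 0 < k) (x₀ : α)
    (hA : IsSteiner (k^2) k A) (hP₀sub : P₀ ⊆ A) (hP₀k : P₀.card = k)
    (hcolP : ∀ p, colf p ∈ P₀) (hcolin : ∀ p, p ∈ colf p)
    (hk1 : 1 < k) {x : α} {b' : Finset α} (hb : b'.card = k)
    {ℓ : Finset β} (hℓ : ℓ ∈ A) (hℓP : ℓ ∉ P₀) :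
    vBlock k x ≠ mkBlock hk0 x₀ P₀ colf b' ℓ := by
  intro h
  have h1 := congrArg (Finset.image Prod.snd) h
  rw [vBlock_snd_image hk0,
    mkBlock_snd_image hk0 x₀ hA hP₀sub hP₀k hcolP hcolin hb hℓ hℓP] at h1
  have := congrArg Finset.card h1
  rw [Finset.card_singleton, hb] at this
  omega

lemma mkBlock_param_eq (hk0 : 0 < k) (x₀ : α)
    (hA : IsSteiner (k^2) k A) (hP₀sub : P₀ ⊆ A) (hP₀k : P₀.card = k)
    (hqk : ∀ q ∈ P₀, q.card = k)
    (hcolP : ∀ p, colf p ∈ P₀) (hcolin : ∀ p, p ∈ colf p)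
    {b₁ b₂ : Finset α} (hb₁ : b₁.card = k) (hb₂ : b₂.card = k)
    {ℓ₁ ℓ₂ : Finset β} (hℓ₁ : ℓ₁ ∈ A) (hℓP₁ : ℓ₁ ∉ P₀) (hℓ₂ : ℓ₂ ∈ A) (hℓP₂ : ℓ₂ ∉ P₀)
    (h : mkBlock hk0 x₀ P₀ colf b₁ ℓ₁ = mkBlock hk0 x₀ P₀ colf b₂ ℓ₂) :
    b₁ = b₂ ∧ ℓ₁ = ℓ₂ := by
  have hb : b₁ = b₂ := by
    have h1 := congrArg (Finset.image Prod.snd) h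
    rwa [mkBlock_snd_image hk0 x₀ hA hP₀sub hP₀k hcolP hcolin hb₁ hℓ₁ hℓP₁,
      mkBlock_snd_image hk0 x₀ hA hP₀sub hP₀k hcolP hcolin hb₂ hℓ₂ hℓP₂] at h1
  subst hb
  refine ⟨rfl, ?_⟩
  rw [mkBlock, mkBlock] at h
  exact Finset.image_injective (eMap_inj hk0 x₀ hP₀k hqk hcolP hcolin hb₁) h

lemma mkBlock_inter_vBlock (hk0 : 0 < k) (x₀ : α)
    (hA : IsSteiner (k^2) k A) (hP₀sub : P₀ ⊆ A) (hP₀k : P₀.card = k)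
    (hcolP : ∀ p, colf p ∈ P₀) (hcolin : ∀ p, p ∈ colf p)
    {b' : Finset α} (hb : b'.card = k) {ℓ : Finset β}
    (hℓ : ℓ ∈ A) (hℓP : ℓ ∉ P₀) {x : α} (hx : x ∈ b') :
    (mkBlock hk0 x₀ P₀ colf b' ℓ ∩ vBlock k x).card = 1 := by
  obtain ⟨qx, hqx, hqxe⟩ := indOf_surj (P₀ := P₀) x₀ hP₀k hb hx
  obtain ⟨p₀, hp₀ℓ, hp₀q⟩ := by
    have h0 := colf_image hA hP₀sub hP₀k hcolP hcolin hℓ hℓP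
    have h1 : qx ∈ ℓ.image colf := h0 ▸ hqx
    exact Finset.mem_image.mp h1
  rw [Finset.card_eq_one]
  refine ⟨eMap hk0 x₀ P₀ colf b' p₀, ?_⟩
  ext z
  simp only [Finset.mem_inter, Finset.mem_singleton]
  constructor
  · rintro ⟨hz1, hz2⟩
    obtain ⟨p, hpℓ, hpz⟩ := Finset.mem_image.mp hz1
    have hsnd : (eMap hk0 x₀ P₀ colf b' p).2 = x := by rw [hpz]; exact (vBlock_mem_iff x z).mp hz2
    simp only [eMap] at hsnd
    have hcq : colf p = qx := indOf_inj x₀ hP₀k hb (hcolP p) hqx (by rw [hsnd, hqxe])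
    have hpp : p = p₀ := colf_inj_on hA hP₀sub hcolP hcolin hℓ hℓP hpℓ hp₀ℓ (by rw [hcq, hp₀q])
    rw [← hpz, hpp]
  · rintro rfl
    refine ⟨Finset.mem_image_of_mem _ hp₀ℓ, ?_⟩
    rw [vBlock_mem_iff]
    simp only [eMap, hp₀q, hqxe]

lemma vBlock_mem_newDesign (hk0 : 0 < k) (x₀ : α) (x : α) :
    vBlock k x ∈ newDesign hk0 x₀ P₀ colf D A :=
  Finset.mem_union_left _ (Finset.mem_image_of_mem _ (Finset.mem_univ x))

lemma mkBlock_mem_newDesign (hk0 : 0 < k) (x₀ : α) {b' : Finset α} (hb' : b' ∈ D)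
    {ℓ : Finset β} (hℓ : ℓ ∈ A) (hℓP : ℓ ∉ P₀) :
    mkBlock hk0 x₀ P₀ colf b' ℓ ∈ newDesign hk0 x₀ P₀ colf D A :=
  Finset.mem_union_right _ (Finset.mem_biUnion.mpr ⟨b', hb',
    Finset.mem_image_of_mem _ (Finset.mem_sdiff.mpr ⟨hℓ, hℓP⟩)⟩)

lemma mem_newDesign_iff (hk0 : 0 < k) (x₀ : α) {s : Finset (Fin k × α)} :
    s ∈ newDesign hk0 x₀ P₀ colf D A ↔
      (∃ x, s = vBlock k x) ∨
      ∃ b' ∈ D, ∃ ℓ ∈ A, ℓ ∉ P₀ ∧ s = mkBlock hk0 x₀ P₀ colf b' ℓ := by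
  constructor
  · intro hs
    rcases Finset.mem_union.mp hs with h | h
    · obtain ⟨x, -, hx⟩ := Finset.mem_image.mp h
      exact Or.inl ⟨x, hx.symm⟩
    · obtain ⟨b', hb', hℓ⟩ := Finset.mem_biUnion.mp h
      obtain ⟨ℓ, hℓm, hℓs⟩ := Finset.mem_image.mp hℓ
      rw [Finset.mem_sdiff] at hℓm
      exact Or.inr ⟨b', hb', ℓ, hℓm.1, hℓm.2, hℓs.symm⟩
  · rintro (⟨x, rfl⟩ | ⟨b', hb', ℓ, hℓ, hℓP, rfl⟩)
    · exact vBlock_mem_newDesign hk0 x₀ x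
    · exact mkBlock_mem_newDesign hk0 x₀ hb' hℓ hℓP

lemma newDesign_steiner (hk0 : 0 < k) (x₀ : α)
    (hD : IsSteiner v k D) (hA : IsSteiner (k^2) k A) (hP₀sub : P₀ ⊆ A) (hP₀k : P₀.card = k)
    (hqk : ∀ q ∈ P₀, q.card = k)
    (hcolP : ∀ p, colf p ∈ P₀) (hcolin : ∀ p, p ∈ colf p)
    (hcoluniq : ∀ p q, q ∈ P₀ → p ∈ q → q = colf p) :
    IsSteiner (k * v) k (newDesign hk0 x₀ P₀ colf D A) := by
  refine ⟨by simp [Fintype.card_prod, Fintype.card_fin, hD.1], ?_, ?_⟩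
  · intro b hb
    rcases (mem_newDesign_iff hk0 x₀).mp hb with ⟨x, rfl⟩ | ⟨b', hb', ℓ, hℓ, hℓP, rfl⟩
    · exact vBlock_card x
    · exact mkBlock_card hk0 x₀ hP₀k hqk hcolP hcolin (hD.2.1 b' hb') (hA.2.1 ℓ hℓ)
  · rintro ⟨i, x⟩ ⟨j, y⟩ hne
    rw [Finset.card_eq_one]
    by_cases hxy : x = y
    · subst hxy
      refine ⟨vBlock k x, ?_⟩
      ext b
      rw [Finset.mem_filter, Finset.mem_singleton]
      constructor
      · rintro ⟨hb, h₁, h₂⟩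
        rcases (mem_newDesign_iff hk0 x₀).mp hb with ⟨x', rfl⟩ | ⟨b', hb', ℓ, hℓ, hℓP, rfl⟩
        · have hxx : x = x' := (vBlock_mem_iff x' (i, x)).mp h₁
          rw [hxx]
        · exfalso
          obtain ⟨p₁, hp₁ℓ, hp₁⟩ := Finset.mem_image.mp h₁
          obtain ⟨p₂, hp₂ℓ, hp₂⟩ := Finset.mem_image.mp h₂
          have hpne : p₁ ≠ p₂ := fun h => hne (by rw [← hp₁, ← hp₂, h])
          have hs₁ : indOf k x₀ P₀ b' (colf p₁) = x := congrArg Prod.snd hp₁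
          have hs₂ : indOf k x₀ P₀ b' (colf p₂) = x := congrArg Prod.snd hp₂
          have hcq : colf p₁ = colf p₂ := indOf_inj x₀ hP₀k (hD.2.1 b' hb')
            (hcolP p₁) (hcolP p₂) (by rw [hs₁, hs₂])
          exact hpne (colf_inj_on hA hP₀sub hcolP hcolin hℓ hℓP hp₁ℓ hp₂ℓ hcq)
      · rintro rfl
        exact ⟨vBlock_mem_newDesign hk0 x₀ x, (vBlock_mem_iff x _).mpr rfl,
          (vBlock_mem_iff x _).mpr rfl⟩
    · obtain ⟨b', hb', hxb, hyb⟩ := steiner_pair_exists hD hxy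
      obtain ⟨p₁, hp₁⟩ := eMap_exists hk0 x₀ hP₀k hqk hcoluniq (hD.2.1 b' hb') hxb i
      obtain ⟨p₂, hp₂⟩ := eMap_exists hk0 x₀ hP₀k hqk hcoluniq (hD.2.1 b' hb') hyb j
      have hpne : p₁ ≠ p₂ := fun h => hne (by rw [← hp₁, ← hp₂, h])
      have hs₁ : indOf k x₀ P₀ b' (colf p₁) = x := congrArg Prod.snd hp₁
      have hs₂ : indOf k x₀ P₀ b' (colf p₂) = y := congrArg Prod.snd hp₂
      obtain ⟨ℓ, hℓ, hp₁ℓ, hp₂ℓ⟩ := steiner_pair_exists hA hpne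
      have hℓP : ℓ ∉ P₀ := by
        intro hℓP₀
        apply hxy
        rw [← hs₁, ← hs₂, ← hcoluniq p₁ ℓ hℓP₀ hp₁ℓ, ← hcoluniq p₂ ℓ hℓP₀ hp₂ℓ]
      refine ⟨mkBlock hk0 x₀ P₀ colf b' ℓ, ?_⟩
      ext b
      rw [Finset.mem_filter, Finset.mem_singleton]
      constructor
      · rintro ⟨hb, h₁, h₂⟩
        rcases (mem_newDesign_iff hk0 x₀).mp hb with ⟨x', rfl⟩ | ⟨b'', hb'', ℓ', hℓ', hℓP', rfl⟩
        · have hxx : x = x' := (vBlock_mem_iff x' (i, x)).mp h₁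
          have hyy : y = x' := (vBlock_mem_iff x' (j, y)).mp h₂
          exact absurd (hxx.trans hyy.symm) hxy
        · obtain ⟨p₁', hp₁'ℓ, hp₁'⟩ := Finset.mem_image.mp h₁
          obtain ⟨p₂', hp₂'ℓ, hp₂'⟩ := Finset.mem_image.mp h₂
          have hx'' : x ∈ b'' := by
            have h' := eMap_snd_mem hk0 x₀ hP₀k hcolP (hD.2.1 b'' hb'') p₁'
            rw [hp₁'] at h'
            exact h'
          have hy'' : y ∈ b'' := by
            have h' := eMap_snd_mem hk0 x₀ hP₀k hcolP (hD.2.1 b'' hb'') p₂'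
            rw [hp₂'] at h'
            exact h'
          have hbeq : b'' = b' := steiner_pair_unique hD hxy hb'' hb' hx'' hy'' hxb hyb
          subst hbeq
          have hpeq₁ : p₁' = p₁ := eMap_inj hk0 x₀ hP₀k hqk hcolP hcolin (hD.2.1 b'' hb')
            (hp₁'.trans hp₁.symm)
          have hpeq₂ : p₂' = p₂ := eMap_inj hk0 x₀ hP₀k hqk hcolP hcolin (hD.2.1 b'' hb')
            (hp₂'.trans hp₂.symm)
          subst hpeq₁; subst hpeq₂
          rw [steiner_pair_unique hA hpne hℓ' hℓ hp₁'ℓ hp₂'ℓ hp₁ℓ hp₂ℓ]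
      · rintro rfl
        exact ⟨mkBlock_mem_newDesign hk0 x₀ hb' hℓ hℓP,
          Finset.mem_image.mpr ⟨p₁, hp₁ℓ, hp₁⟩, Finset.mem_image.mpr ⟨p₂, hp₂ℓ, hp₂⟩⟩

lemma newDesign_resolvable (hk0 : 0 < k) (hk1 : 1 < k) (x₀ : α)
    (hD : IsSteiner v k D) (hA : IsSteiner (k^2) k A) (hP₀sub : P₀ ⊆ A) (hP₀k : P₀.card = k)
    (hqk : ∀ q ∈ P₀, q.card = k)
    (hcolP : ∀ p, colf p ∈ P₀) (hcolin : ∀ p, p ∈ colf p)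
    (hcoluniq : ∀ p q, q ∈ P₀ → p ∈ q → q = colf p)
    {csD : Finset (Finset (Finset α))}
    (hcsD : ∀ Q ∈ csD, IsParallelClass D Q) (hcsDuniq : ∀ b ∈ D, ∃! Q, Q ∈ csD ∧ b ∈ Q)
    {csA : Finset (Finset (Finset β))}
    (hcsA : ∀ P ∈ csA, IsParallelClass A P) (hcsAuniq : ∀ b ∈ A, ∃! P, P ∈ csA ∧ b ∈ P)
    (hP₀cs : P₀ ∈ csA) :
    IsResolvable (newDesign hk0 x₀ P₀ colf D A) := by
  classical
  set Bs := newDesign hk0 x₀ P₀ colf D A with hBs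
  set vc : Finset (Finset (Fin k × α)) := Finset.univ.image (vBlock k) with hvc
  set mixcl : Finset (Finset α) → Finset (Finset β) → Finset (Finset (Fin k × α)) :=
    fun Q P => (Q ×ˢ P).image (fun bl => mkBlock hk0 x₀ P₀ colf bl.1 bl.2) with hmix
  -- facts about classes in csA.erase P₀
  have herase : ∀ P ∈ csA.erase P₀, ∀ ℓ ∈ P, ℓ ∈ A ∧ ℓ ∉ P₀ := by
    intro P hP ℓ hℓ
    have hPcs := Finset.mem_of_mem_erase hP
    have hℓA : ℓ ∈ A := (hcsA P hPcs).1 hℓ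
    refine ⟨hℓA, fun hℓP₀ => ?_⟩
    obtain ⟨P', -, huniq⟩ := hcsAuniq ℓ hℓA
    exact (Finset.ne_of_mem_erase hP) ((huniq P ⟨hPcs, hℓ⟩).trans (huniq P₀ ⟨hP₀cs, hℓP₀⟩).symm)
  have hvcpar : IsParallelClass Bs vc := by
    refine ⟨?_, ?_, ?_⟩
    · intro b hb
      obtain ⟨x, -, rfl⟩ := Finset.mem_image.mp hb
      exact vBlock_mem_newDesign hk0 x₀ x
    · intro b₁ h₁ b₂ h₂ hne
      obtain ⟨x, -, rfl⟩ := Finset.mem_image.mp h₁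
      obtain ⟨y, -, rfl⟩ := Finset.mem_image.mp h₂
      have hxy : x ≠ y := fun h => hne (by rw [h])
      ext z
      simp only [Finset.mem_inter, Finset.notMem_empty, iff_false]
      rintro ⟨hz₁, hz₂⟩
      exact hxy (((vBlock_mem_iff x z).mp hz₁).symm.trans ((vBlock_mem_iff y z).mp hz₂))
    · rintro ⟨i, x⟩
      exact ⟨vBlock k x, Finset.mem_image_of_mem _ (Finset.mem_univ x),
        (vBlock_mem_iff x _).mpr rfl⟩
  have hmixpar : ∀ Q ∈ csD, ∀ P ∈ csA.erase P₀, IsParallelClass Bs (mixcl Q P) := by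
    intro Q hQ P hP
    have hQsub := (hcsD Q hQ).1
    refine ⟨?_, ?_, ?_⟩
    · intro b hb
      obtain ⟨⟨b', ℓ⟩, hbl, rfl⟩ := Finset.mem_image.mp hb
      rw [Finset.mem_product] at hbl
      obtain ⟨hℓA, hℓP₀⟩ := herase P hP ℓ hbl.2
      exact mkBlock_mem_newDesign hk0 x₀ (hQsub hbl.1) hℓA hℓP₀
    · intro b₁ h₁ b₂ h₂ hne
      obtain ⟨⟨b₁', ℓ₁⟩, hbl₁, rfl⟩ := Finset.mem_image.mp h₁
      obtain ⟨⟨b₂', ℓ₂⟩, hbl₂, rfl⟩ := Finset.mem_image.mp h₂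
      rw [Finset.mem_product] at hbl₁ hbl₂
      ext z
      simp only [Finset.mem_inter, Finset.notMem_empty, iff_false]
      rintro ⟨hz₁, hz₂⟩
      obtain ⟨p₁, hp₁ℓ, hp₁⟩ := Finset.mem_image.mp hz₁
      obtain ⟨p₂, hp₂ℓ, hp₂⟩ := Finset.mem_image.mp hz₂
      have hbeq : b₁' = b₂' := by
        by_contra hbne
        have hdisj := (hcsD Q hQ).2.1 b₁' hbl₁.1 b₂' hbl₂.1 hbne
        have hz1 : z.2 ∈ b₁' := by
          have h' := eMap_snd_mem hk0 x₀ hP₀k hcolP (hD.2.1 b₁' (hQsub hbl₁.1)) p₁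
          rw [hp₁] at h'; exact h'
        have hz2 : z.2 ∈ b₂' := by
          have h' := eMap_snd_mem hk0 x₀ hP₀k hcolP (hD.2.1 b₂' (hQsub hbl₂.1)) p₂
          rw [hp₂] at h'; exact h'
        exact absurd (Finset.mem_inter.mpr ⟨hz1, hz2⟩) (hdisj ▸ Finset.notMem_empty z.2)
      subst hbeq
      have hpeq : p₁ = p₂ := eMap_inj hk0 x₀ hP₀k hqk hcolP hcolin
        (hD.2.1 b₁' (hQsub hbl₁.1)) (hp₁.trans hp₂.symm)
      subst hpeq
      have hℓeq : ℓ₁ = ℓ₂ := by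
        by_contra hℓne
        have hPcs := Finset.mem_of_mem_erase hP
        have hdisj := (hcsA P hPcs).2.1 ℓ₁ hbl₁.2 ℓ₂ hbl₂.2 hℓne
        exact absurd (Finset.mem_inter.mpr ⟨hp₁ℓ, hp₂ℓ⟩) (hdisj ▸ Finset.notMem_empty p₁)
      exact hne (by rw [hℓeq])
    · rintro ⟨i, x⟩
      obtain ⟨b', hb'Q, hxb'⟩ := (hcsD Q hQ).2.2 x
      obtain ⟨p, hp⟩ := eMap_exists hk0 x₀ hP₀k hqk hcoluniq (hD.2.1 b' (hQsub hb'Q)) hxb' i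
      obtain ⟨ℓ, hℓP, hpℓ⟩ := (hcsA P (Finset.mem_of_mem_erase hP)).2.2 p
      refine ⟨mkBlock hk0 x₀ P₀ colf b' ℓ, ?_, ?_⟩
      · exact Finset.mem_image.mpr ⟨(b', ℓ), Finset.mem_product.mpr ⟨hb'Q, hℓP⟩, rfl⟩
      · exact Finset.mem_image.mpr ⟨p, hpℓ, hp⟩
  refine ⟨insert vc ((csD ×ˢ csA.erase P₀).image fun QP => mixcl QP.1 QP.2), ?_, ?_⟩
  · intro C hC
    rcases Finset.mem_insert.mp hC with rfl | hC
    · exact hvcpar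
    · obtain ⟨⟨Q, P⟩, hQP, rfl⟩ := Finset.mem_image.mp hC
      rw [Finset.mem_product] at hQP
      exact hmixpar Q hQP.1 P hQP.2
  · intro b hb
    rcases (mem_newDesign_iff hk0 x₀).mp hb with ⟨x, rfl⟩ | ⟨b', hb', ℓ, hℓ, hℓP, rfl⟩
    · refine ⟨vc, ⟨Finset.mem_insert_self _ _,
        Finset.mem_image_of_mem _ (Finset.mem_univ x)⟩, ?_⟩
      rintro C ⟨hC, hbC⟩
      rcases Finset.mem_insert.mp hC with rfl | hC
      · rfl
      · exfalso
        obtain ⟨⟨Q, P⟩, hQP, rfl⟩ := Finset.mem_image.mp hC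
        rw [Finset.mem_product] at hQP
        obtain ⟨⟨b'', ℓ''⟩, hbl, hbeq⟩ := Finset.mem_image.mp hbC
        rw [Finset.mem_product] at hbl
        obtain ⟨hℓA, hℓP₀⟩ := herase P hQP.2 ℓ'' hbl.2
        exact vBlock_ne_mkBlock hk0 x₀ hA hP₀sub hP₀k hcolP hcolin hk1
          (hD.2.1 b'' ((hcsD Q hQP.1).1 hbl.1)) hℓA hℓP₀ hbeq.symm
    · obtain ⟨Q, ⟨hQcs, hb'Q⟩, hQuniq⟩ := hcsDuniq b' hb'
      obtain ⟨P, ⟨hPcs, hℓPc⟩, hPuniq⟩ := hcsAuniq ℓ hℓ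
      have hPe : P ∈ csA.erase P₀ := by
        refine Finset.mem_erase.mpr ⟨fun h => hℓP (h ▸ hℓPc), hPcs⟩
      refine ⟨mixcl Q P, ⟨Finset.mem_insert_of_mem (Finset.mem_image.mpr
        ⟨(Q, P), Finset.mem_product.mpr ⟨hQcs, hPe⟩, rfl⟩),
        Finset.mem_image.mpr ⟨(b', ℓ), Finset.mem_product.mpr ⟨hb'Q, hℓPc⟩, rfl⟩⟩, ?_⟩
      rintro C ⟨hC, hbC⟩
      rcases Finset.mem_insert.mp hC with rfl | hC
      · exfalso
        obtain ⟨x, -, hxeq⟩ := Finset.mem_image.mp hbC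
        exact vBlock_ne_mkBlock hk0 x₀ hA hP₀sub hP₀k hcolP hcolin hk1
          (hD.2.1 b' hb') hℓ hℓP hxeq
      · obtain ⟨⟨Q', P'⟩, hQP', rfl⟩ := Finset.mem_image.mp hC
        rw [Finset.mem_product] at hQP'
        obtain ⟨⟨b'', ℓ''⟩, hbl, hbeq⟩ := Finset.mem_image.mp hbC
        rw [Finset.mem_product] at hbl
        obtain ⟨hℓ''A, hℓ''P₀⟩ := herase P' hQP'.2 ℓ'' hbl.2
        obtain ⟨hbe, hle⟩ := mkBlock_param_eq hk0 x₀ hA hP₀sub hP₀k hqk hcolP hcolin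
          (hD.2.1 b'' ((hcsD Q' hQP'.1).1 hbl.1)) (hD.2.1 b' hb') hℓ''A hℓ''P₀ hℓ hℓP hbeq
        have hQ'eq : Q' = Q := (hQuniq Q' ⟨hQP'.1, hbe ▸ hbl.1⟩)
        have hP'eq : P' = P := (hPuniq P' ⟨Finset.mem_of_mem_erase hQP'.2, hle ▸ hbl.2⟩)
        rw [hQ'eq, hP'eq]

end Construction

/-- Given a resolvable `2-(v,k,1)` design `D` and an affine plane of order `k`,
there is a resolvable `2-(kv,k,1)` design `D*` on `Fin k × (points of D)` whose
1-block intersection graph is silver; moreover the parallel class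
`{{1,…,k} × {x} : x}` is a maximum independent set admitting a silver
coloring. -/
theorem stmt18 {β : Type*} [Fintype α] [DecidableEq α] [Fintype β] [DecidableEq β]
    (v k : ℕ) (hk : 2 < k) (hkv : k < v)
    (D : Finset (Finset α)) (hD : IsSteiner v k D) (hDres : IsResolvable D)
    (A : Finset (Finset β)) (hA : IsSteiner (k ^ 2) k A) (hAres : IsResolvable A) :
    ∃ Bs : Finset (Finset (Fin k × α)),
      IsSteiner (k * v) k Bs ∧ IsResolvable Bs ∧
      ∃ I : Finset {b : Finset (Fin k × α) // b ∈ Bs},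
        (∀ b : {b : Finset (Fin k × α) // b ∈ Bs},
          b ∈ I ↔ ∃ x : α, b.1 = Finset.univ.image fun i : Fin k => (i, x)) ∧
        IsMaxIndep (BIG 1 Bs) I ∧
        SilverWith (BIG 1 Bs) (k * (k * v - k) / (k - 1)) I := by
  classical
  have hk0 : 0 < k := by omega
  have hk1 : 1 < k := by omega
  have hv0 : 0 < v := by omega
  -- a point of α
  have hαne : Nonempty α := by
    rw [← Fintype.card_pos_iff, hD.1]; omega
  obtain ⟨x₀⟩ := hαne
  obtain ⟨csD, hcsD, hcsDuniq⟩ := hDres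
  obtain ⟨csA, hcsA, hcsAuniq⟩ := hAres
  -- a block of A and its parallel class P₀
  have hβnt : Nontrivial β := by
    rw [← Fintype.one_lt_card_iff_nontrivial, hA.1]
    nlinarith
  obtain ⟨a₀, a₁, hane⟩ := exists_pair_ne β
  obtain ⟨ℓ₀, hℓ₀A, -, -⟩ := steiner_pair_exists hA hane
  obtain ⟨P₀, ⟨hP₀cs, -⟩, -⟩ := hcsAuniq ℓ₀ hℓ₀A
  have hP₀ := hcsA P₀ hP₀cs
  have hP₀sub : P₀ ⊆ A := hP₀.1
  have hP₀k : P₀.card = k := by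
    have h1 := parallel_card hP₀ hA.2.1 hA.1
    have h2 : k * k = k^2 := (sq k).symm
    exact Nat.eq_of_mul_eq_mul_right hk0 (by omega)
  have hqk : ∀ q ∈ P₀, q.card = k := fun q hq => hA.2.1 q (hP₀sub hq)
  -- the column function
  have hcolex : ∀ p : β, ∃ q, q ∈ P₀ ∧ p ∈ q := by
    intro p
    obtain ⟨q, hq, hpq⟩ := hP₀.2.2 p
    exact ⟨q, hq, hpq⟩
  choose colf hcolP hcolin using hcolex
  have hcoluniq : ∀ p q, q ∈ P₀ → p ∈ q → q = colf p := by
    intro p q hq hpq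
    by_contra hne
    have hd := hP₀.2.1 q hq (colf p) (hcolP p) hne
    exact absurd (Finset.mem_inter.mpr ⟨hpq, hcolin p⟩) (hd ▸ Finset.notMem_empty p)
  -- the design
  refine ⟨newDesign hk0 x₀ P₀ colf D A,
    newDesign_steiner hk0 x₀ hD hA hP₀sub hP₀k hqk hcolP hcolin hcoluniq,
    newDesign_resolvable hk0 hk1 x₀ hD hA hP₀sub hP₀k hqk hcolP hcolin hcoluniq
      hcsD hcsDuniq hcsA hcsAuniq hP₀cs, ?_⟩
  set Bs := newDesign hk0 x₀ P₀ colf D A with hBsdef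
  have hSt : IsSteiner (k * v) k Bs :=
    newDesign_steiner hk0 x₀ hD hA hP₀sub hP₀k hqk hcolP hcolin hcoluniq
  -- the independent set of vertical blocks
  refine ⟨Finset.univ.image (fun x : α => (⟨vBlock k x, vBlock_mem_newDesign hk0 x₀ x⟩ :
    {b : Finset (Fin k × α) // b ∈ Bs})), ?_, ?_, ?_⟩
  · -- characterization of I
    intro b
    constructor
    · intro hb
      obtain ⟨x, -, hx⟩ := Finset.mem_image.mp hb
      exact ⟨x, by rw [← hx]; rfl⟩
    · rintro ⟨x, hx⟩
      exact Finset.mem_image.mpr ⟨x, Finset.mem_univ x, Subtype.ext hx.symm⟩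
  · -- maximum independent set
    constructor
    · rintro a ha b hb ⟨hne, hcard⟩
      obtain ⟨x, -, hax⟩ := Finset.mem_image.mp ha
      obtain ⟨y, -, hby⟩ := Finset.mem_image.mp hb
      have hxy : x ≠ y := by
        rintro rfl
        exact hne (hax ▸ hby ▸ rfl)
      have : (a.1 ∩ b.1) = ∅ := by
        rw [← hax, ← hby]
        ext z
        simp only [Finset.mem_inter, Finset.notMem_empty, iff_false]
        rintro ⟨hz₁, hz₂⟩
        exact hxy (((vBlock_mem_iff x z).mp hz₁).symm.trans ((vBlock_mem_iff y z).mp hz₂))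
      rw [this] at hcard
      simp at hcard
    · intro J hJ
      have hIcard : (Finset.univ.image (fun x : α => (⟨vBlock k x,
          vBlock_mem_newDesign hk0 x₀ x⟩ : {b : Finset (Fin k × α) // b ∈ Bs}))).card = v := by
        rw [Finset.card_image_of_injective _ (fun x y h => vBlock_inj hk0 (congrArg Subtype.val h)),
          Finset.card_univ, hD.1]
      rw [hIcard]
      have hdisj : ∀ a ∈ J, ∀ b ∈ J, a ≠ b → Disjoint (a.1 : Finset (Fin k × α)) b.1 := by
        intro a ha b hb hne
        have hne' : a.1 ≠ b.1 := fun h => hne (Subtype.ext h)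
        have hle := steiner_inter_le_one hSt a.2 b.2 hne'
        have hne1 : (a.1 ∩ b.1).card ≠ 1 := fun h => hJ a ha b hb ⟨hne, h⟩
        rw [Finset.disjoint_iff_inter_eq_empty, ← Finset.card_eq_zero]
        omega
      have hsum := Finset.card_biUnion hdisj
      have hsub : (J.biUnion fun b => b.1).card ≤ k * v := by
        calc (J.biUnion fun b => b.1).card ≤ (Finset.univ : Finset (Fin k × α)).card :=
              Finset.card_le_card (Finset.subset_univ _)
          _ = k * v := by rw [Finset.card_univ, Fintype.card_prod, Fintype.card_fin, hD.1]
      rw [hsum] at hsub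
      have : ∑ b ∈ J, (b.1 : Finset (Fin k × α)).card = J.card * k := by
        rw [Finset.sum_congr rfl (fun b _ => hSt.2.1 b.1 b.2), Finset.sum_const, smul_eq_mul]
      rw [this] at hsub
      have : J.card * k ≤ v * k := by rw [mul_comm v k]; exact hsub
      exact Nat.le_of_mul_le_mul_right this hk0
  · -- silver coloring
    -- arithmetic on the number of colors
    have hcsDcard : csD.card * (k-1) = v - 1 := class_count hD hcsD hcsDuniq hv0
    have hAP₀card : (A \ P₀).card = k^2 := by
      have hAcard : A.card = k^2 + k := by
        have h1 := steiner_count hA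
        obtain ⟨m, rfl⟩ : ∃ m, k = m + 1 := ⟨k - 1, by omega⟩
        have h2 : ((m+1)^2 + (m+1)) * ((m+1) * ((m+1) - 1)) = (m+1)^2 * ((m+1)^2 - 1) := by
          have h3 : (m+1)^2 = m^2 + 2*m + 1 := by ring
          have h4 : (m+1)^2 - 1 = m^2 + 2*m := by omega
          have h5 : (m+1) - 1 = m := by omega
          rw [h4, h3, h5]
          ring
        apply Nat.eq_of_mul_eq_mul_right (show 0 < (m+1) * ((m+1) - 1) by simp; omega)
        rw [h1, ← h2]
      rw [Finset.card_sdiff_of_subset hP₀sub, hAcard, hP₀k]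
      omega
    have hre : k * (k * v - k) / (k - 1) = csD.card * k^2 := by
      have h2 : k * (v-1) = k*v - k := by
        have := Nat.mul_sub_one v k
        calc k * (v - 1) = k * v - k * 1 := Nat.mul_sub k v 1
          _ = k * v - k := by rw [mul_one]
      have h1 : k * (k * v - k) = (k-1) * (csD.card * k^2) := by
        calc k * (k * v - k) = k * (k * (v-1)) := by rw [h2]
          _ = k * (k * (csD.card * (k-1))) := by rw [hcsDcard]
          _ = (k-1) * (csD.card * k^2) := by ring
      rw [h1, Nat.mul_div_cancel_left _ (show 0 < k - 1 by omega)]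
    rw [hre]
    -- the abstract color set
    have hScard : Fintype.card (Option ({Q // Q ∈ csD} × {ℓ // ℓ ∈ A \ P₀}))
        = csD.card * k^2 + 1 := by
      rw [Fintype.card_option, Fintype.card_prod, Fintype.card_coe, Fintype.card_coe, hAP₀card]
    have eqv : Option ({Q // Q ∈ csD} × {ℓ // ℓ ∈ A \ P₀}) ≃ Fin (csD.card * k^2 + 1) :=
      Fintype.equivFinOfCardEq hScard
    -- class-of-block choice function
    have hQex : ∀ b' : Finset α, ∃ Q, b' ∈ D → (Q ∈ csD ∧ b' ∈ Q ∧
        ∀ Q' ∈ csD, b' ∈ Q' → Q' = Q) := by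
      intro b'
      by_cases hb' : b' ∈ D
      · obtain ⟨Q, ⟨hQ, hbQ⟩, huniq⟩ := hcsDuniq b' hb'
        exact ⟨Q, fun _ => ⟨hQ, hbQ, fun Q' hQ' hbQ' => huniq Q' ⟨hQ', hbQ'⟩⟩⟩
      · exact ⟨∅, fun h => absurd h hb'⟩
    choose Qf hQf using hQex
    -- the abstract coloring
    have hcex : ∀ b : {b : Finset (Fin k × α) // b ∈ Bs},
        ∃ s : Option ({Q // Q ∈ csD} × {ℓ // ℓ ∈ A \ P₀}),
        (∀ x : α, b.1 = vBlock k x → s = none) ∧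
        (∀ b' (hb' : b' ∈ D) ℓ (hℓ : ℓ ∈ A \ P₀), b.1 = mkBlock hk0 x₀ P₀ colf b' ℓ →
          s = some (⟨Qf b', (hQf b' hb').1⟩, ⟨ℓ, hℓ⟩)) := by
      intro b
      rcases (mem_newDesign_iff hk0 x₀).mp b.2 with ⟨x, hx⟩ | ⟨b₀', hb₀', ℓ₀, hℓ₀A, hℓ₀P, heq⟩
      · refine ⟨none, fun _ _ => rfl, ?_⟩
        intro b' hb' ℓ hℓ hbm
        exfalso
        rw [Finset.mem_sdiff] at hℓ
        exact vBlock_ne_mkBlock hk0 x₀ hA hP₀sub hP₀k hcolP hcolin hk1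
          (hD.2.1 b' hb') hℓ.1 hℓ.2 (hx ▸ hbm)
      · refine ⟨some (⟨Qf b₀', (hQf b₀' hb₀').1⟩,
          ⟨ℓ₀, Finset.mem_sdiff.mpr ⟨hℓ₀A, hℓ₀P⟩⟩), ?_, ?_⟩
        · intro x hx
          exfalso
          exact vBlock_ne_mkBlock hk0 x₀ hA hP₀sub hP₀k hcolP hcolin hk1
            (hD.2.1 b₀' hb₀') hℓ₀A hℓ₀P (hx ▸ heq)
        · intro b' hb' ℓ hℓ hbm
          rw [Finset.mem_sdiff] at hℓ
          obtain ⟨hbe, hle⟩ := mkBlock_param_eq hk0 x₀ hA hP₀sub hP₀k hqk hcolP hcolin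
            (hD.2.1 b₀' hb₀') (hD.2.1 b' hb') hℓ₀A hℓ₀P hℓ.1 hℓ.2 (heq.symm.trans hbm)
          subst hbe; subst hle
          rfl
    choose cAbs hcAbs1 hcAbs2 using hcex
    refine ⟨fun b => eqv (cAbs b), ?_, ?_⟩
    · -- properness
      rintro a b ⟨hne, hcard⟩
      intro hceq
      have hceq' : cAbs a = cAbs b := eqv.injective hceq
      obtain ⟨z, hz⟩ := Finset.card_pos.mp (show 0 < (a.1 ∩ b.1).card by omega)
      rw [Finset.mem_inter] at hz
      have habne : a.1 ≠ b.1 := fun h => hne (Subtype.ext h)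
      rcases (mem_newDesign_iff hk0 x₀).mp a.2 with ⟨xa, hxa⟩ | ⟨ba, hba, ℓa, hℓaA, hℓaP, hea⟩ <;>
        rcases (mem_newDesign_iff hk0 x₀).mp b.2 with ⟨xb, hxb⟩ | ⟨bb, hbb, ℓb, hℓbA, hℓbP, heb⟩
      · -- both vertical
        apply habne
        rw [hxa, hxb]
        have h1 : z.2 = xa := (vBlock_mem_iff xa z).mp (hxa ▸ hz.1)
        have h2 : z.2 = xb := (vBlock_mem_iff xb z).mp (hxb ▸ hz.2)
        rw [← h1, ← h2]
      · -- a vertical, b mk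
        have h1 : cAbs a = none := hcAbs1 a xa hxa
        have h2 := hcAbs2 b bb hbb ℓb (Finset.mem_sdiff.mpr ⟨hℓbA, hℓbP⟩) heb
        rw [hceq', h2] at h1
        exact Option.some_ne_none _ h1
      · have h1 : cAbs b = none := hcAbs1 b xb hxb
        have h2 := hcAbs2 a ba hba ℓa (Finset.mem_sdiff.mpr ⟨hℓaA, hℓaP⟩) hea
        rw [← hceq', h2] at h1
        exact Option.some_ne_none _ h1
      · -- both mk
        have h1 := hcAbs2 a ba hba ℓa (Finset.mem_sdiff.mpr ⟨hℓaA, hℓaP⟩) hea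
        have h2 := hcAbs2 b bb hbb ℓb (Finset.mem_sdiff.mpr ⟨hℓbA, hℓbP⟩) heb
        rw [h1, h2] at hceq'
        have h3 := Option.some.inj hceq'
        have hQeq : Qf ba = Qf bb := congrArg Subtype.val (congrArg Prod.fst h3)
        have hleq : ℓa = ℓb := congrArg Subtype.val (congrArg Prod.snd h3)
        have hzba : z.2 ∈ ba := by
          obtain ⟨p, -, hp⟩ := Finset.mem_image.mp (hea ▸ hz.1)
          have h' := eMap_snd_mem hk0 x₀ hP₀k hcolP (hD.2.1 ba hba) p
          rw [hp] at h'; exact h'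
        have hzbb : z.2 ∈ bb := by
          obtain ⟨p, -, hp⟩ := Finset.mem_image.mp (heb ▸ hz.2)
          have h' := eMap_snd_mem hk0 x₀ hP₀k hcolP (hD.2.1 bb hbb) p
          rw [hp] at h'; exact h'
        have hbaeq : ba = bb := by
          by_contra hbne
          have hdisj := (hcsD (Qf ba) (hQf ba hba).1).2.1 ba (hQf ba hba).2.1 bb
            (hQeq ▸ (hQf bb hbb).2.1) hbne
          exact absurd (Finset.mem_inter.mpr ⟨hzba, hzbb⟩) (hdisj ▸ Finset.notMem_empty z.2)
        exact habne (by rw [hea, heb, hbaeq, hleq])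
    · -- rainbow at every vertical block
      intro b hb col
      obtain ⟨x, -, hbx⟩ := Finset.mem_image.mp hb
      have hbx' : b.1 = vBlock k x := by rw [← hbx]
      rcases hs : eqv.symm col with _ | ⟨⟨Q, hQ⟩, ⟨ℓ, hℓ⟩⟩
      · refine ⟨b, Or.inl rfl, ?_⟩
        show eqv (cAbs b) = col
        rw [hcAbs1 b x hbx', ← hs, Equiv.apply_symm_apply]
      · obtain ⟨b', hb'Q, hxb'⟩ := (hcsD Q hQ).2.2 x
        have hb'D : b' ∈ D := (hcsD Q hQ).1 hb'Q
        rw [Finset.mem_sdiff] at hℓ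
        refine ⟨⟨mkBlock hk0 x₀ P₀ colf b' ℓ,
          mkBlock_mem_newDesign hk0 x₀ hb'D hℓ.1 hℓ.2⟩, Or.inr ?_, ?_⟩
        · refine ⟨?_, ?_⟩
          · intro h
            exact vBlock_ne_mkBlock hk0 x₀ hA hP₀sub hP₀k hcolP hcolin hk1
              (hD.2.1 b' hb'D) hℓ.1 hℓ.2 (hbx' ▸ congrArg Subtype.val h)
          · show (b.1 ∩ mkBlock hk0 x₀ P₀ colf b' ℓ).card = 1
            rw [hbx', Finset.inter_comm]
            exact mkBlock_inter_vBlock hk0 x₀ hA hP₀sub hP₀k hcolP hcolin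
              (hD.2.1 b' hb'D) hℓ.1 hℓ.2 hxb'
        · have h2 := hcAbs2 ⟨mkBlock hk0 x₀ P₀ colf b' ℓ,
            mkBlock_mem_newDesign hk0 x₀ hb'D hℓ.1 hℓ.2⟩ b' hb'D ℓ
            (Finset.mem_sdiff.mpr ⟨hℓ.1, hℓ.2⟩) rfl
          have hQeq : Qf b' = Q := ((hQf b' hb'D).2.2 Q hQ hb'Q).symm ▸ rfl
          have h3 : cAbs ⟨mkBlock hk0 x₀ P₀ colf b' ℓ,
              mkBlock_mem_newDesign hk0 x₀ hb'D hℓ.1 hℓ.2⟩ = eqv.symm col := by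
            rw [h2, hs]
            congr 1
            exact Prod.ext (Subtype.ext hQeq) rfl
          show eqv (cAbs ⟨mkBlock hk0 x₀ P₀ colf b' ℓ,
            mkBlock_mem_newDesign hk0 x₀ hb'D hℓ.1 hℓ.2⟩) = col
          rw [h3, Equiv.apply_symm_apply]
end

section
/- If v ≡ 3 (mod 6) and there exists a Kirkman triple system KTS(v), then there exists a Kirkman triple system K on 3v points whose 1-block intersection graph is silver, with the silver coloring taken with respect to the maximum independent set consisting of the v blocks {(1,x),(2,x),(3,x)} for x ranging over the points of the original system. -/
open Finset

variable {α : Type*}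

section SilverAux
variable [DecidableEq α]

/-- Vertical block. -/
def svert (x : α) : Finset (Fin 3 × α) := Finset.univ.image fun i : Fin 3 => (i, x)

/-- Oblique line in a copy of `AG(2,3)`. -/
def sline (σ : Fin 3 → α) (s c : Fin 3) : Finset (Fin 3 × α) :=
  Finset.univ.image fun j : Fin 3 => (c + s * j, σ j)

lemma mem_svert {x : α} {p : Fin 3 × α} : p ∈ svert x ↔ p.2 = x := by
  simp only [svert, mem_image, mem_univ, true_and]
  constructor
  · rintro ⟨i, rfl⟩; rfl
  · intro h
    refine ⟨p.1, ?_⟩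
    rw [← h]

lemma mem_sline {σ : Fin 3 → α} {s c : Fin 3} {p : Fin 3 × α} :
    p ∈ sline σ s c ↔ ∃ j, (c + s * j, σ j) = p := by
  simp [sline]

lemma card_svert (x : α) : (svert x).card = 3 := by
  rw [svert, Finset.card_image_of_injective _ (fun a b h => (Prod.mk.injEq _ _ _ _).mp h |>.1)]
  simp

lemma card_sline {σ : Fin 3 → α} (hσ : Function.Injective σ) (s c : Fin 3) :
    (sline σ s c).card = 3 := by
  rw [sline, Finset.card_image_of_injective]
  · simp
  · intro a b h
    exact hσ ((Prod.mk.injEq _ _ _ _).mp h).2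

lemma snd_svert (x : α) : (svert x).image Prod.snd = {x} := by
  ext y
  simp only [mem_image, mem_singleton]
  constructor
  · rintro ⟨p, hp, rfl⟩; exact mem_svert.mp hp
  · rintro rfl; exact ⟨((0 : Fin 3), y), mem_svert.mpr rfl, rfl⟩

lemma snd_sline (σ : Fin 3 → α) (s c : Fin 3) :
    (sline σ s c).image Prod.snd = Finset.univ.image σ := by
  ext y
  simp only [mem_image, mem_univ, true_and]
  constructor
  · rintro ⟨p, hp, rfl⟩
    obtain ⟨j, rfl⟩ := mem_sline.mp hp
    exact ⟨j, rfl⟩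
  · rintro ⟨j, rfl⟩
    exact ⟨(c + s * j, σ j), mem_sline.mpr ⟨j, rfl⟩, rfl⟩

lemma svert_ne_sline {x : α} {σ : Fin 3 → α} (hσ : Function.Injective σ) (s c : Fin 3) :
    svert x ≠ sline σ s c := by
  intro h
  have h2 : ({x} : Finset α).card = (Finset.univ.image σ).card := by
    rw [← snd_svert x, ← snd_sline σ s c, h]
  rw [Finset.card_singleton, Finset.card_image_of_injective _ hσ] at h2
  simp at h2

lemma svert_injective : Function.Injective (svert (α := α)) := by
  intro x y h
  have : ((0 : Fin 3), x) ∈ svert y := h ▸ mem_svert.mpr rfl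
  exact mem_svert.mp this

private lemma fin3_lin : ∀ s c s' c' : Fin 3,
    c' + s' * 0 = c + s * 0 → c' + s' * 1 = c + s * 1 → s = s' ∧ c = c' := by decide

lemma sline_inj {σ : Fin 3 → α} (hσ : Function.Injective σ) {s c s' c' : Fin 3}
    (h : sline σ s c = sline σ s' c') : s = s' ∧ c = c' := by
  have h0 : ((c + s * 0, σ 0) : Fin 3 × α) ∈ sline σ s' c' := h ▸ mem_sline.mpr ⟨0, rfl⟩
  have h1 : ((c + s * 1, σ 1) : Fin 3 × α) ∈ sline σ s' c' := h ▸ mem_sline.mpr ⟨1, rfl⟩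
  obtain ⟨j0, hj0⟩ := mem_sline.mp h0
  obtain ⟨j1, hj1⟩ := mem_sline.mp h1
  have e0 : j0 = 0 := hσ (congrArg Prod.snd hj0)
  have e1 : j1 = 1 := hσ (congrArg Prod.snd hj1)
  subst e0; subst e1
  exact fin3_lin s c s' c' (congrArg Prod.fst hj0) (congrArg Prod.fst hj1)

lemma fin3_solve_ex : ∀ i₁ i₂ j₁ j₂ : Fin 3, j₁ ≠ j₂ →
    ∃ sc : Fin 3 × Fin 3, i₁ = sc.2 + sc.1 * j₁ ∧ i₂ = sc.2 + sc.1 * j₂ := by decide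

lemma fin3_solve_uniq : ∀ i₁ i₂ j₁ j₂ s c s' c' : Fin 3, j₁ ≠ j₂ →
    i₁ = c + s * j₁ → i₂ = c + s * j₂ → i₁ = c' + s' * j₁ → i₂ = c' + s' * j₂ →
    s = s' ∧ c = c' := by decide

/-- Extract an enumeration of a 3-element finset. -/
lemma exists_enum {b : Finset α} (hb : b.card = 3) :
    ∃ σ : Fin 3 → α, Function.Injective σ ∧ Finset.univ.image σ = b := by
  have e := b.equivFinOfCardEq hb
  refine ⟨fun j => (e.symm j : α), ?_, ?_⟩
  · intro a b' h
    exact e.symm.injective (Subtype.ext h)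
  · ext x
    simp only [mem_image, mem_univ, true_and]
    constructor
    · rintro ⟨j, rfl⟩; exact (e.symm j).2
    · intro hx; exact ⟨e ⟨x, hx⟩, by simp⟩

/-- The slope-`s` parallel class coming from a parallel class `P` of the base design. -/
def slcls (σ : Finset α → Fin 3 → α) (P : Finset (Finset α)) (s : Fin 3) :
    Finset (Finset (Fin 3 × α)) :=
  P.biUnion fun b => Finset.univ.image fun cc => sline (σ b) s cc

lemma mem_slcls {σ : Finset α → Fin 3 → α} {P : Finset (Finset α)} {s : Fin 3}
    {t : Finset (Fin 3 × α)} :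
    t ∈ slcls σ P s ↔ ∃ b ∈ P, ∃ cc, t = sline (σ b) s cc := by
  simp only [slcls, mem_biUnion, mem_image, mem_univ, true_and]
  constructor
  · rintro ⟨b, hb, cc, rfl⟩; exact ⟨b, hb, cc, rfl⟩
  · rintro ⟨b, hb, cc, rfl⟩; exact ⟨b, hb, cc, rfl⟩

lemma BIG_adj [DecidableEq α] {i : ℕ} {B : Finset (Finset α)} {a b : {b : Finset α // b ∈ B}} :
    (BIG i B).Adj a b ↔ a ≠ b ∧ ((a : Finset α) ∩ (b : Finset α)).card = i := Iff.rfl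

end SilverAux

/-- If `v ≡ 3 (mod 6)` and a Kirkman triple system on `v` points exists, then
there is a Kirkman triple system on `3v` points whose 1-block intersection
graph is silver, with the silver coloring taken with respect to the maximum
independent set of blocks `{(1,x),(2,x),(3,x)}`, `x` a point of the original
system. -/
theorem stmt19 [Fintype α] [DecidableEq α] (v : ℕ) (hv : v % 6 = 3)
    (D : Finset (Finset α)) (hD : IsSteiner v 3 D) (hDres : IsResolvable D) :
    ∃ Bs : Finset (Finset (Fin 3 × α)),
      IsSteiner (3 * v) 3 Bs ∧ IsResolvable Bs ∧
      ∃ I : Finset {b : Finset (Fin 3 × α) // b ∈ Bs},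
        (∀ b : {b : Finset (Fin 3 × α) // b ∈ Bs},
          b ∈ I ↔ ∃ x : α, b.1 = Finset.univ.image fun i : Fin 3 => (i, x)) ∧
        IsMaxIndep (BIG 1 Bs) I ∧
        SilverWith (BIG 1 Bs) (3 * (3 * v - 3) / 2) I := by
  classical
  obtain ⟨hcard, hD3, hDpair⟩ := hD
  obtain ⟨csD, hcs1, hcs2⟩ := hDres
  have hv3 : 3 ≤ v := by omega
  have hα : Nonempty α := by
    rw [← Fintype.card_pos_iff, hcard]; omega
  -- enumerations of the blocks of D
  have hσex : ∀ b : Finset α, ∃ σb : Fin 3 → α,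
      b ∈ D → (Function.Injective σb ∧ Finset.univ.image σb = b) := by
    intro b
    by_cases hb : b ∈ D
    · obtain ⟨σb, h1, h2⟩ := exists_enum (hD3 b hb)
      exact ⟨σb, fun _ => ⟨h1, h2⟩⟩
    · exact ⟨fun _ => Classical.arbitrary α, fun h => absurd h hb⟩
  choose σ hσ using hσex
  have hσi : ∀ b ∈ D, Function.Injective (σ b) := fun b hb => (hσ b hb).1
  have hσim : ∀ b ∈ D, Finset.univ.image (σ b) = b := fun b hb => (hσ b hb).2
  -- unique block through a pair of points of D
  have pairD : ∀ x y : α, x ≠ y → ∃ b, b ∈ D ∧ x ∈ b ∧ y ∈ b ∧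
      ∀ b' ∈ D, x ∈ b' → y ∈ b' → b' = b := by
    intro x y hxy
    obtain ⟨b, hb⟩ := Finset.card_eq_one.mp (hDpair x y hxy)
    have hbm : b ∈ D.filter fun b => x ∈ b ∧ y ∈ b := hb ▸ Finset.mem_singleton_self b
    obtain ⟨hbD, hxb, hyb⟩ := Finset.mem_filter.mp hbm
    refine ⟨b, hbD, hxb, hyb, fun b' hb' hx' hy' => ?_⟩
    have : b' ∈ D.filter fun b => x ∈ b ∧ y ∈ b := Finset.mem_filter.mpr ⟨hb', hx', hy'⟩
    rw [hb] at this
    exact Finset.mem_singleton.mp this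
  -- the unique parallel class of D containing a block
  have hclsex : ∀ b : Finset α, ∃ P, b ∈ D →
      (P ∈ csD ∧ b ∈ P ∧ ∀ Q ∈ csD, b ∈ Q → Q = P) := by
    intro b
    by_cases hb : b ∈ D
    · obtain ⟨P, ⟨hP, hbP⟩, huniq⟩ := hcs2 b hb
      exact ⟨P, fun _ => ⟨hP, hbP, fun Q hQ hbQ => huniq Q ⟨hQ, hbQ⟩⟩⟩
    · exact ⟨∅, fun h => absurd h hb⟩
  choose cls hcls using hclsex
  -- the block set
  set Bs : Finset (Finset (Fin 3 × α)) :=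
    (Finset.univ.image svert) ∪
      D.biUnion (fun b => (Finset.univ ×ˢ Finset.univ).image
        fun p : Fin 3 × Fin 3 => sline (σ b) p.1 p.2) with hBsdef
  have mem_Bs : ∀ t : Finset (Fin 3 × α), t ∈ Bs ↔
      (∃ x, t = svert x) ∨ ∃ b ∈ D, ∃ s c, t = sline (σ b) s c := by
    intro t
    rw [hBsdef, Finset.mem_union, Finset.mem_image, Finset.mem_biUnion]
    constructor
    · rintro (⟨x, _, rfl⟩ | ⟨b, hb, ht⟩)
      · exact Or.inl ⟨x, rfl⟩
      · right
        rw [Finset.mem_image] at ht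
        obtain ⟨p, _, rfl⟩ := ht
        exact ⟨b, hb, p.1, p.2, rfl⟩
    · rintro (⟨x, rfl⟩ | ⟨b, hb, s, c, rfl⟩)
      · exact Or.inl ⟨x, Finset.mem_univ x, rfl⟩
      · refine Or.inr ⟨b, hb, ?_⟩
        rw [Finset.mem_image]
        exact ⟨(s, c), by simp, rfl⟩
  have svert_mem : ∀ x : α, svert x ∈ Bs := fun x => (mem_Bs _).mpr (Or.inl ⟨x, rfl⟩)
  have sline_mem : ∀ b ∈ D, ∀ s c, sline (σ b) s c ∈ Bs :=
    fun b hb s c => (mem_Bs _).mpr (Or.inr ⟨b, hb, s, c, rfl⟩)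
  -- decomposition uniqueness across copies
  have sline_eq : ∀ b ∈ D, ∀ b' ∈ D, ∀ s c s' c', sline (σ b) s c = sline (σ b') s' c' →
      b = b' ∧ s = s' ∧ c = c' := by
    intro b hb b' hb' s c s' c' h
    have hbb : b = b' := by
      rw [← hσim b hb, ← hσim b' hb', ← snd_sline (σ b) s c, ← snd_sline (σ b') s' c', h]
    subst hbb
    exact ⟨rfl, sline_inj (hσi b hb) h⟩
  have svert_inter : ∀ x y : α, x ≠ y → svert x ∩ svert y = ∅ := by
    intro x y hxy
    ext p
    simp only [Finset.mem_inter, mem_svert, Finset.notMem_empty, iff_false, not_and]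
    intro h1 h2
    exact hxy (h1 ▸ h2)
  -- snd of a point on a line lies in the block
  have snd_mem : ∀ b ∈ D, ∀ s c (p : Fin 3 × α), p ∈ sline (σ b) s c → p.2 ∈ b := by
    intro b hb s c p hp
    obtain ⟨j, rfl⟩ := mem_sline.mp hp
    have : σ b j ∈ Finset.univ.image (σ b) :=
      Finset.mem_image.mpr ⟨j, Finset.mem_univ j, rfl⟩
    rwa [hσim b hb] at this
  -- block sizes
  have hBs3 : ∀ t ∈ Bs, t.card = 3 := by
    intro t ht
    rcases (mem_Bs t).mp ht with ⟨x, rfl⟩ | ⟨b, hb, s, c, rfl⟩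
    · exact card_svert x
    · exact card_sline (hσi b hb) s c
  -- Steiner pair property for Bs
  have hpair : ∀ p q : Fin 3 × α, p ≠ q →
      (Bs.filter fun t => p ∈ t ∧ q ∈ t).card = 1 := by
    rintro ⟨i₁, x₁⟩ ⟨i₂, x₂⟩ hpq
    rw [Finset.card_eq_one]
    by_cases hxx : x₁ = x₂
    · subst hxx
      refine ⟨svert x₁, Finset.eq_singleton_iff_unique_mem.mpr ⟨?_, ?_⟩⟩
      · exact Finset.mem_filter.mpr ⟨svert_mem x₁, mem_svert.mpr rfl, mem_svert.mpr rfl⟩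
      · intro t ht
        obtain ⟨htB, hp, hq⟩ := Finset.mem_filter.mp ht
        rcases (mem_Bs t).mp htB with ⟨z, rfl⟩ | ⟨b, hb, s, c, rfl⟩
        · have hzz : x₁ = z := mem_svert.mp hp
          rw [hzz]
        · exfalso
          obtain ⟨j₁, hj₁⟩ := mem_sline.mp hp
          obtain ⟨j₂, hj₂⟩ := mem_sline.mp hq
          have hx1 : σ b j₁ = x₁ := congrArg Prod.snd hj₁
          have hx2 : σ b j₂ = x₁ := congrArg Prod.snd hj₂
          have : j₁ = j₂ := hσi b hb (hx1.trans hx2.symm)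
          subst this
          apply hpq
          rw [← hj₁, ← hj₂]
    · obtain ⟨b, hbD, hx1b, hx2b, hbuniq⟩ := pairD x₁ x₂ hxx
      have hx1b'' : x₁ ∈ Finset.univ.image (σ b) := by rw [hσim b hbD]; exact hx1b
      have hx2b'' : x₂ ∈ Finset.univ.image (σ b) := by rw [hσim b hbD]; exact hx2b
      obtain ⟨j₁, _, hj₁⟩ := Finset.mem_image.mp hx1b''
      obtain ⟨j₂, _, hj₂⟩ := Finset.mem_image.mp hx2b''
      have hjne : j₁ ≠ j₂ := fun h => hxx (hj₁ ▸ hj₂ ▸ h ▸ rfl)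
      obtain ⟨⟨s, cc⟩, h1, h2⟩ := fin3_solve_ex i₁ i₂ j₁ j₂ hjne
      dsimp only at h1 h2
      refine ⟨sline (σ b) s cc, Finset.eq_singleton_iff_unique_mem.mpr ⟨?_, ?_⟩⟩
      · refine Finset.mem_filter.mpr ⟨sline_mem b hbD s cc, ?_, ?_⟩
        · exact mem_sline.mpr ⟨j₁, by rw [hj₁, ← h1]⟩
        · exact mem_sline.mpr ⟨j₂, by rw [hj₂, ← h2]⟩
      · intro t ht
        obtain ⟨htB, hp, hq⟩ := Finset.mem_filter.mp ht
        rcases (mem_Bs t).mp htB with ⟨z, rfl⟩ | ⟨b', hb', s', c', rfl⟩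
        · exfalso
          exact hxx ((mem_svert.mp hp).trans (mem_svert.mp hq).symm)
        · have hx1b' : x₁ ∈ b' := snd_mem b' hb' s' c' _ hp
          have hx2b' : x₂ ∈ b' := snd_mem b' hb' s' c' _ hq
          have hbb : b' = b := hbuniq b' hb' hx1b' hx2b'
          subst hbb
          obtain ⟨j₁', hj₁'⟩ := mem_sline.mp hp
          obtain ⟨j₂', hj₂'⟩ := mem_sline.mp hq
          have e1 : j₁' = j₁ := hσi b' hbD ((congrArg Prod.snd hj₁').trans hj₁.symm)
          have e2 : j₂' = j₂ := hσi b' hbD ((congrArg Prod.snd hj₂').trans hj₂.symm)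
          have f1 : i₁ = c' + s' * j₁ := by
            rw [← e1]; exact (congrArg Prod.fst hj₁').symm
          have f2 : i₂ = c' + s' * j₂ := by
            rw [← e2]; exact (congrArg Prod.fst hj₂').symm
          obtain ⟨es, ec⟩ := fin3_solve_uniq i₁ i₂ j₁ j₂ s cc s' c' hjne h1 h2 f1 f2
          rw [← es, ← ec]
  -- distinct blocks of Bs meet in at most one point
  have inter_le_one : ∀ t₁ ∈ Bs, ∀ t₂ ∈ Bs, t₁ ≠ t₂ → (t₁ ∩ t₂).card ≤ 1 := by
    intro t₁ h₁ t₂ h₂ hne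
    by_contra hgt
    push_neg at hgt
    obtain ⟨p, hp, q, hq, hpq⟩ := Finset.one_lt_card.mp hgt
    obtain ⟨hp1, hp2⟩ := Finset.mem_inter.mp hp
    obtain ⟨hq1, hq2⟩ := Finset.mem_inter.mp hq
    obtain ⟨u, hu⟩ := Finset.card_eq_one.mp (hpair p q hpq)
    have e1 : t₁ = u := Finset.mem_singleton.mp
      (hu ▸ Finset.mem_filter.mpr ⟨h₁, hp1, hq1⟩)
    have e2 : t₂ = u := Finset.mem_singleton.mp
      (hu ▸ Finset.mem_filter.mpr ⟨h₂, hp2, hq2⟩)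
    exact hne (e1.trans e2.symm)
  refine ⟨Bs, ⟨?_, hBs3, hpair⟩, ?_, ?_⟩
  · rw [Fintype.card_prod, Fintype.card_fin, hcard]
  · -- Resolvability
    refine ⟨insert (Finset.univ.image svert)
      ((csD ×ˢ (Finset.univ : Finset (Fin 3))).image fun Pc => slcls σ Pc.1 Pc.2), ?_, ?_⟩
    · intro Q hQ
      rcases Finset.mem_insert.mp hQ with rfl | hQ'
      · -- vertical class
        refine ⟨?_, ?_, ?_⟩
        · intro t ht
          obtain ⟨x, _, rfl⟩ := Finset.mem_image.mp ht
          exact svert_mem x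
        · intro t₁ h₁ t₂ h₂ hne
          obtain ⟨x, _, rfl⟩ := Finset.mem_image.mp h₁
          obtain ⟨y, _, rfl⟩ := Finset.mem_image.mp h₂
          exact svert_inter x y (fun h => hne (h ▸ rfl))
        · intro p
          exact ⟨svert p.2, Finset.mem_image.mpr ⟨p.2, Finset.mem_univ _, rfl⟩,
            mem_svert.mpr rfl⟩
      · obtain ⟨⟨P, s⟩, hmem, rfl⟩ := Finset.mem_image.mp hQ'
        have hP : P ∈ csD := (Finset.mem_product.mp hmem).1
        obtain ⟨hPD, hPdisj, hPcov⟩ := hcs1 P hP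
        refine ⟨?_, ?_, ?_⟩
        · intro t ht
          obtain ⟨b, hbP, cc, rfl⟩ := mem_slcls.mp ht
          exact sline_mem b (hPD hbP) s cc
        · intro t₁ h₁ t₂ h₂ hne
          obtain ⟨b₁, hb₁, c₁, rfl⟩ := mem_slcls.mp h₁
          obtain ⟨b₂, hb₂, c₂, rfl⟩ := mem_slcls.mp h₂
          ext p
          simp only [Finset.mem_inter, Finset.notMem_empty, iff_false, not_and]
          intro hp1 hp2
          by_cases hbb : b₁ = b₂
          · subst hbb
            obtain ⟨j₁, hj₁⟩ := mem_sline.mp hp1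
            obtain ⟨j₂, hj₂⟩ := mem_sline.mp hp2
            have : j₁ = j₂ := hσi b₁ (hPD hb₁)
              ((congrArg Prod.snd hj₁).trans (congrArg Prod.snd hj₂).symm)
            subst this
            have hcc : c₁ + s * j₁ = c₂ + s * j₁ :=
              (congrArg Prod.fst hj₁).trans (congrArg Prod.fst hj₂).symm
            have : c₁ = c₂ := by
              have := add_right_cancel hcc
              exact this
            exact hne (this ▸ rfl)
          · have h1 : p.2 ∈ b₁ := snd_mem b₁ (hPD hb₁) s c₁ p hp1
            have h2 : p.2 ∈ b₂ := snd_mem b₂ (hPD hb₂) s c₂ p hp2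
            have := hPdisj b₁ hb₁ b₂ hb₂ hbb
            have : p.2 ∈ b₁ ∩ b₂ := Finset.mem_inter.mpr ⟨h1, h2⟩
            rw [hPdisj b₁ hb₁ b₂ hb₂ hbb] at this
            exact absurd this (Finset.notMem_empty _)
        · rintro ⟨i, x⟩
          obtain ⟨b, hbP, hxb⟩ := hPcov x
          have hxb' : x ∈ Finset.univ.image (σ b) := by rw [hσim b (hPD hbP)]; exact hxb
          obtain ⟨j, _, hj⟩ := Finset.mem_image.mp hxb'

          refine ⟨sline (σ b) s (i - s * j), mem_slcls.mpr ⟨b, hbP, i - s * j, rfl⟩, ?_⟩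
          refine mem_sline.mpr ⟨j, ?_⟩
          rw [hj]
          congr 1
          exact sub_add_cancel i (s * j)
    · -- every block lies in a unique class
      intro t ht
      rcases (mem_Bs t).mp ht with ⟨x, rfl⟩ | ⟨b, hbD, s, c, rfl⟩
      · refine ⟨Finset.univ.image svert, ⟨Finset.mem_insert_self _ _,
          Finset.mem_image.mpr ⟨x, Finset.mem_univ _, rfl⟩⟩, ?_⟩
        rintro Q' ⟨hQ', htQ'⟩
        rcases Finset.mem_insert.mp hQ' with rfl | hQ''
        · rfl
        · exfalso
          obtain ⟨⟨P, s⟩, hmem, rfl⟩ := Finset.mem_image.mp hQ''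
          have hP : P ∈ csD := (Finset.mem_product.mp hmem).1
          obtain ⟨b, hbP, cc, hEq⟩ := mem_slcls.mp htQ'
          exact svert_ne_sline (hσi b ((hcs1 P hP).1 hbP)) s cc hEq
      · have hP : cls b ∈ csD := (hcls b hbD).1
        have hbP : b ∈ cls b := (hcls b hbD).2.1
        refine ⟨slcls σ (cls b) s, ⟨?_, mem_slcls.mpr ⟨b, hbP, c, rfl⟩⟩, ?_⟩
        · refine Finset.mem_insert.mpr (Or.inr (Finset.mem_image.mpr
            ⟨(cls b, s), Finset.mem_product.mpr ⟨hP, Finset.mem_univ _⟩, rfl⟩))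
        · rintro Q' ⟨hQ', htQ'⟩
          rcases Finset.mem_insert.mp hQ' with rfl | hQ''
          · exfalso
            obtain ⟨x, _, hEq⟩ := Finset.mem_image.mp htQ'
            exact svert_ne_sline (hσi b hbD) s c hEq
          · obtain ⟨⟨P', s'⟩, hmem, rfl⟩ := Finset.mem_image.mp hQ''
            have hP' : P' ∈ csD := (Finset.mem_product.mp hmem).1
            obtain ⟨b', hb'P', cc', hEq⟩ := mem_slcls.mp htQ'
            have hb'D : b' ∈ D := (hcs1 P' hP').1 hb'P'
            obtain ⟨ebb, ess, ecc⟩ := sline_eq b hbD b' hb'D s c s' cc' hEq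
            subst ebb
            subst ess
            have : P' = cls b := (hcls b hbD).2.2 P' hP' hb'P'
            rw [this]
  · -- the independent set and the silver coloring
    refine ⟨Finset.univ.image (fun x : α => (⟨svert x, svert_mem x⟩ : {t // t ∈ Bs})), ?_, ?_, ?_⟩
    · intro t
      simp only [Finset.mem_image, Finset.mem_univ, true_and]
      constructor
      · rintro ⟨x, rfl⟩
        exact ⟨x, rfl⟩
      · rintro ⟨x, hx⟩
        exact ⟨x, Subtype.ext hx.symm⟩
    · constructor
      · rintro a ha b hb hadj
        simp only [Finset.mem_image, Finset.mem_univ, true_and] at ha hb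
        obtain ⟨x, rfl⟩ := ha
        obtain ⟨y, rfl⟩ := hb
        obtain ⟨hne, hone⟩ := hadj
        have hxy : x ≠ y := fun h => hne (by rw [h])
        rw [show ((⟨svert x, svert_mem x⟩ : {t // t ∈ Bs}) : Finset (Fin 3 × α)) = svert x from rfl,
          show ((⟨svert y, svert_mem y⟩ : {t // t ∈ Bs}) : Finset (Fin 3 × α)) = svert y from rfl,
          svert_inter x y hxy] at hone
        simp at hone
      · intro J hJ
        have hdisj : ∀ a ∈ J, ∀ b ∈ J, a ≠ b →
            Disjoint (a : Finset (Fin 3 × α)) (b : Finset (Fin 3 × α)) := by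
          intro a ha b hb hab
          have hne1 : ((a : Finset (Fin 3 × α)) ∩ b).card ≠ 1 :=
            fun h => hJ a ha b hb (BIG_adj.mpr ⟨hab, h⟩)
          have hle := inter_le_one a.1 a.2 b.1 b.2 (fun h => hab (Subtype.ext h))
          have h0 : ((a : Finset (Fin 3 × α)) ∩ b).card = 0 := by omega
          rw [Finset.card_eq_zero] at h0
          exact Finset.disjoint_iff_inter_eq_empty.mpr h0
        have h1 : (J.biUnion fun t => (t : Finset (Fin 3 × α))).card
            = ∑ t ∈ J, (t : Finset (Fin 3 × α)).card := Finset.card_biUnion hdisj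
        have h2 : ∑ t ∈ J, (t : Finset (Fin 3 × α)).card = J.card * 3 :=
          Finset.sum_const_nat (fun t _ => hBs3 t.1 t.2)
        have h3 : (J.biUnion fun t => (t : Finset (Fin 3 × α))).card ≤ 3 * v := by
          have := Finset.card_le_univ (J.biUnion fun t => (t : Finset (Fin 3 × α)))
          simp only [Finset.card_univ, Fintype.card_prod, Fintype.card_fin, hcard] at this
          omega
        have h4 : (Finset.univ.image
            (fun x : α => (⟨svert x, svert_mem x⟩ : {t // t ∈ Bs}))).card = v := by
          rw [Finset.card_image_of_injective _
            (fun x y h => svert_injective (congrArg Subtype.val h))]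
          rw [Finset.card_univ, hcard]
        omega
    · -- the silver coloring
      -- Step 1: count the parallel classes of D
      obtain ⟨x0⟩ := hα
      have hTcount : 2 * (D.filter fun b => x0 ∈ b).card = v - 1 := by
        set T := D.filter fun b => x0 ∈ b with hT
        have hdisj : ∀ b ∈ T, ∀ b' ∈ T, b ≠ b' →
            Disjoint (b.erase x0) (b'.erase x0) := by
          intro b hb b' hb' hbb
          rw [Finset.disjoint_left]
          intro y hy hy'
          obtain ⟨hyx, hyb⟩ := Finset.mem_erase.mp hy
          obtain ⟨_, hyb'⟩ := Finset.mem_erase.mp hy'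
          obtain ⟨hbD, hxb⟩ := Finset.mem_filter.mp hb
          obtain ⟨hbD', hxb'⟩ := Finset.mem_filter.mp hb'
          obtain ⟨u, huD, hxu, hyu, huniq⟩ := pairD x0 y (Ne.symm hyx)
          exact hbb ((huniq b hbD hxb hyb).trans (huniq b' hbD' hxb' hyb').symm)
        have hbi : T.biUnion (fun b => b.erase x0) = Finset.univ.erase x0 := by
          ext y
          simp only [Finset.mem_biUnion, Finset.mem_erase, Finset.mem_univ, and_true]
          constructor
          · rintro ⟨b, _, hy⟩
            exact hy.1
          · intro hy
            obtain ⟨b, hbD, hxb, hyb, _⟩ := pairD x0 y (Ne.symm hy)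
            exact ⟨b, Finset.mem_filter.mpr ⟨hbD, hxb⟩, hy, hyb⟩
        have h1 : (T.biUnion fun b => b.erase x0).card = ∑ b ∈ T, (b.erase x0).card :=
          Finset.card_biUnion hdisj
        have h2 : ∑ b ∈ T, (b.erase x0).card = T.card * 2 := by
          refine Finset.sum_const_nat ?_
          intro b hb
          obtain ⟨hbD, hxb⟩ := Finset.mem_filter.mp hb
          rw [Finset.card_erase_of_mem hxb, hD3 b hbD]
        have h3 : (Finset.univ.erase x0).card = v - 1 := by
          rw [Finset.card_erase_of_mem (Finset.mem_univ x0), Finset.card_univ, hcard]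
        rw [hbi, h3] at h1
        omega
      have hcsT : csD.card = (D.filter fun b => x0 ∈ b).card := by
        have hchoice : ∀ P ∈ csD, ∃ b, b ∈ P ∧ x0 ∈ b := by
          intro P hP
          obtain ⟨b, hbP, hxb⟩ := (hcs1 P hP).2.2 x0
          exact ⟨b, hbP, hxb⟩
        refine Finset.card_bij (fun P hP => Classical.choose (hchoice P hP)) ?_ ?_ ?_
        · intro P hP
          obtain ⟨hbP, hxb⟩ := Classical.choose_spec (hchoice P hP)
          exact Finset.mem_filter.mpr ⟨(hcs1 P hP).1 hbP, hxb⟩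
        · intro P hP P' hP' heq
          obtain ⟨hbP, _⟩ := Classical.choose_spec (hchoice P hP)
          obtain ⟨hbP', _⟩ := Classical.choose_spec (hchoice P' hP')
          have heq2 : Classical.choose (hchoice P hP) = Classical.choose (hchoice P' hP') := heq
          rw [heq2] at hbP
          have hbD : Classical.choose (hchoice P' hP') ∈ D := (hcs1 P' hP').1 hbP'
          exact ((hcls _ hbD).2.2 P hP hbP).trans ((hcls _ hbD).2.2 P' hP' hbP').symm
        · intro b hb
          obtain ⟨hbD, hxb⟩ := Finset.mem_filter.mp hb
          refine ⟨cls b, (hcls b hbD).1, ?_⟩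
          obtain ⟨hbP', hxb'⟩ := Classical.choose_spec (hchoice (cls b) (hcls b hbD).1)
          set b' := Classical.choose (hchoice (cls b) (hcls b hbD).1) with hb'
          by_contra hne
          have hdisj := ((hcs1 (cls b) (hcls b hbD).1).2.1) b' hbP' b (hcls b hbD).2.1 hne
          have : x0 ∈ b' ∩ b := Finset.mem_inter.mpr ⟨hxb', hxb⟩
          rw [hdisj] at this
          exact absurd this (Finset.notMem_empty _)
      -- the color count
      have hcardC : Fintype.card (Option ({P // P ∈ csD} × (Fin 3 × Fin 3)))
          = 3 * (3 * v - 3) / 2 + 1 := by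
        rw [Fintype.card_option, Fintype.card_prod, Fintype.card_coe,
          Fintype.card_prod, Fintype.card_fin]
        omega
      set e := Fintype.equivFinOfCardEq hcardC with he
      -- the raw coloring
      have hspec : ∀ t : {b // b ∈ Bs}, ∃ col : Option ({P // P ∈ csD} × (Fin 3 × Fin 3)),
          ((∃ x, t.1 = svert x) → col = none) ∧
          (∀ b0, b0 ∈ D → ∀ s cc, t.1 = sline (σ b0) s cc →
            ∃ hb0 : cls b0 ∈ csD, col = some (⟨cls b0, hb0⟩, s, cc)) := by
        intro t
        rcases (mem_Bs t.1).mp t.2 with ⟨x, hx⟩ | ⟨b0, hb0, s, cc, hEq⟩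
        · refine ⟨none, fun _ => rfl, ?_⟩
          intro b0' hb0' s' cc' hEq'
          exact absurd (hx.symm.trans hEq') (svert_ne_sline (hσi b0' hb0') s' cc')
        · refine ⟨some (⟨cls b0, (hcls b0 hb0).1⟩, s, cc), ?_, ?_⟩
          · intro ⟨x, hx⟩
            exact absurd (hx.symm.trans hEq) (svert_ne_sline (hσi b0 hb0) s cc)
          · intro b0' hb0' s' cc' hEq'
            obtain ⟨ebb, ess, ecc⟩ := sline_eq b0 hb0 b0' hb0' s cc s' cc' (hEq.symm.trans hEq')
            subst ebb; subst ess; subst ecc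
            exact ⟨(hcls b0 hb0).1, rfl⟩
      choose f hf using hspec
      refine ⟨fun t => e (f t), ?_, ?_⟩
      · -- properness
        intro a b hadj
        obtain ⟨hne, hone⟩ := hadj
        intro hcol
        have hfab : f a = f b := e.injective hcol
        rcases (mem_Bs a.1).mp a.2 with ⟨x, hxa⟩ | ⟨b0, hb0, s, cc, hEqa⟩
        · rcases (mem_Bs b.1).mp b.2 with ⟨y, hyb⟩ | ⟨b0', hb0', s', cc', hEqb⟩
          · -- vert / vert : not adjacent
            have hxy : x ≠ y := by
              intro h
              exact hne (Subtype.ext (hxa.trans (h ▸ hyb.symm)))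
            have : (a.1 ∩ b.1).card = 0 := by
              rw [hxa, hyb, svert_inter x y hxy, Finset.card_empty]
            omega
          · obtain ⟨hP, hfb⟩ := (hf b).2 b0' hb0' s' cc' hEqb
            have hfa : f a = none := (hf a).1 ⟨x, hxa⟩
            rw [hfa, hfb] at hfab
            exact Option.some_ne_none _ hfab.symm
        · rcases (mem_Bs b.1).mp b.2 with ⟨y, hyb⟩ | ⟨b0', hb0', s', cc', hEqb⟩
          · obtain ⟨hP, hfa⟩ := (hf a).2 b0 hb0 s cc hEqa
            have hfb : f b = none := (hf b).1 ⟨y, hyb⟩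
            rw [hfa, hfb] at hfab
            exact Option.some_ne_none _ hfab
          · obtain ⟨hP, hfa⟩ := (hf a).2 b0 hb0 s cc hEqa
            obtain ⟨hP', hfb⟩ := (hf b).2 b0' hb0' s' cc' hEqb
            rw [hfa, hfb] at hfab
            have h1 := Option.some.inj hfab
            have hPP : cls b0 = cls b0' := congrArg (fun z => (Subtype.val z.1)) h1
            have hss : s = s' := congrArg (fun z => z.2.1) h1
            have hcc : cc = cc' := congrArg (fun z => z.2.2) h1
            by_cases hbb : b0 = b0'
            · subst hbb; subst hss; subst hcc
              exact hne (Subtype.ext (hEqa.trans hEqb.symm))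
            · have hb0P : b0 ∈ cls b0 := (hcls b0 hb0).2.1
              have hb0P' : b0' ∈ cls b0 := hPP ▸ (hcls b0' hb0').2.1
              have hdis := (hcs1 (cls b0) hP).2.1 b0 hb0P b0' hb0P' hbb
              have hint : a.1 ∩ b.1 = ∅ := by
                ext p
                simp only [Finset.mem_inter, Finset.notMem_empty, iff_false, not_and]
                intro hp1 hp2
                have m1 : p.2 ∈ b0 := snd_mem b0 hb0 s cc p (hEqa ▸ hp1)
                have m2 : p.2 ∈ b0' := snd_mem b0' hb0' s' cc' p (hEqb ▸ hp2)
                have : p.2 ∈ b0 ∩ b0' := Finset.mem_inter.mpr ⟨m1, m2⟩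
                rw [hdis] at this
                exact absurd this (Finset.notMem_empty _)
              rw [hint, Finset.card_empty] at hone
              omega
      · -- rainbow at each vertical
        intro t htI col
        simp only [Finset.mem_image, Finset.mem_univ, true_and] at htI
        obtain ⟨z, rfl⟩ := htI
        rcases hE : e.symm col with _ | ⟨⟨P, hP⟩, s, cc⟩
        · refine ⟨⟨svert z, svert_mem z⟩, Or.inl rfl, ?_⟩
          have hfz : f ⟨svert z, svert_mem z⟩ = none := (hf _).1 ⟨z, rfl⟩
          show e (f ⟨svert z, svert_mem z⟩) = col
          rw [hfz, ← hE, Equiv.apply_symm_apply]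
        · obtain ⟨b0, hb0P, hzb0⟩ := (hcs1 P hP).2.2 z
          have hb0D : b0 ∈ D := (hcs1 P hP).1 hb0P
          have hPcls : P = cls b0 := (hcls b0 hb0D).2.2 P hP hb0P
          refine ⟨⟨sline (σ b0) s cc, sline_mem b0 hb0D s cc⟩, Or.inr ?_, ?_⟩
          · refine ⟨?_, ?_⟩
            · intro h
              exact svert_ne_sline (hσi b0 hb0D) s cc (congrArg Subtype.val h)
            · -- the intersection is a single point
              have hzim : z ∈ Finset.univ.image (σ b0) := by rw [hσim b0 hb0D]; exact hzb0
              obtain ⟨j, _, hj⟩ := Finset.mem_image.mp hzim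
              have : svert z ∩ sline (σ b0) s cc = {(cc + s * j, z)} := by
                ext p
                simp only [Finset.mem_inter, Finset.mem_singleton, mem_svert, mem_sline]
                constructor
                · rintro ⟨h2, j', hj'⟩
                  have hz' : σ b0 j' = z := by
                    rw [← h2, ← hj']
                  have : j' = j := hσi b0 hb0D (hz'.trans hj.symm)
                  subst this
                  rw [← hj', hz']
                · rintro rfl
                  exact ⟨rfl, j, by rw [hj]⟩
              rw [show ((⟨svert z, svert_mem z⟩ : {t // t ∈ Bs}) : Finset (Fin 3 × α))
                  = svert z from rfl,
                show ((⟨sline (σ b0) s cc, sline_mem b0 hb0D s cc⟩ :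
                  {t // t ∈ Bs}) : Finset (Fin 3 × α)) = sline (σ b0) s cc from rfl,
                this, Finset.card_singleton]
          · obtain ⟨hPm, hfv⟩ := (hf ⟨sline (σ b0) s cc, sline_mem b0 hb0D s cc⟩).2
              b0 hb0D s cc rfl
            show e (f ⟨sline (σ b0) s cc, sline_mem b0 hb0D s cc⟩) = col
            rw [hfv]
            have hsub : (⟨cls b0, hPm⟩ : {P // P ∈ csD}) = ⟨P, hP⟩ := Subtype.ext hPcls.symm
            rw [hsub, ← hE, Equiv.apply_symm_apply]
end
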